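/- arXiv:2310.09845 — 7 statements merged into one kernel-verified Lean document; each statement's English description precedes it below -/
import Mathlib

section
/- Let A ⊆ ℝⁿ, y ∈ A, and let K be a convex cone in ℝⁿ. Then K is a Boltyanski approximating cone to A at y if and only if there exist ε > 0 and a continuous map G : K ∩ B_n(ε) → A such that G(0) = y and G(k) = y + k + o(k) as k → 0 with k ∈ K ∩ B_n(ε). -/
open Set Metric Filter Asymptotics Topology

/-- A convex cone in a real vector space: contains `0`, is convex, and is
invariant under multiplication by nonnegative scalars. -/
def IsConvexCone {E : Type*} [AddCommMonoid E] [Module ℝ E] (C : Set E) : Prop :=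
  (0 : E) ∈ C ∧ Convex ℝ C ∧ ∀ r : ℝ, 0 ≤ r → ∀ c ∈ C, r • c ∈ C

/-- `K` is a Boltyanski approximating cone to `A` at `y`: there are `m : ℕ`, a convex cone
`C ⊆ ℝᵐ`, a linear map `L : ℝᵐ → E` with `K = L(C)`, a `δ > 0` and a continuous map
`F : C ∩ B_m(δ) → A` with `F 0 = y` and `F c = y + L c + o(c)`. -/
def IsBoltyanskiCone {E : Type*} [NormedAddCommGroup E] [NormedSpace ℝ E]
    (A : Set E) (y : E) (K : Set E) : Prop :=
  ∃ (m : ℕ) (C : Set (EuclideanSpace ℝ (Fin m)))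
    (L : EuclideanSpace ℝ (Fin m) →ₗ[ℝ] E) (δ : ℝ)
    (F : EuclideanSpace ℝ (Fin m) → E),
    IsConvexCone C ∧ K = ⇑L '' C ∧ 0 < δ ∧
    ContinuousOn F (C ∩ closedBall 0 δ) ∧
    (∀ c ∈ C ∩ closedBall 0 δ, F c ∈ A) ∧ F 0 = y ∧
    (fun c => F c - y - L c) =o[𝓝[C ∩ closedBall 0 δ] 0] (fun c => c)

lemma approx_lemma {m n : ℕ} {C : Set (EuclideanSpace ℝ (Fin m))} (hC : IsConvexCone C)
    (L : EuclideanSpace ℝ (Fin m) →ₗ[ℝ] EuclideanSpace ℝ (Fin n))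
    {K : Set (EuclideanSpace ℝ (Fin n))} (hK : K = ⇑L '' C) {γ : ℝ} (hγ : 0 < γ) :
    ∃ R : ℝ, 1 ≤ R ∧ ∀ k ∈ K, ∃ c ∈ C, ‖c‖ ≤ R * ‖k‖ ∧ ‖L c - k‖ ≤ γ * ‖k‖ := by
  set S : Set (EuclideanSpace ℝ (Fin n)) := closure K ∩ sphere 0 1 with hS
  have hScpt : IsCompact S :=
    IsCompact.of_isClosed_subset (isCompact_sphere 0 1)
      (isClosed_closure.inter isClosed_sphere) inter_subset_right
  have hcover : S ⊆ ⋃ c : ↥C, ball (L c.1) γ := by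
    intro u hu
    obtain ⟨b, hbK, hub⟩ := Metric.mem_closure_iff.1 hu.1 γ hγ
    rw [hK] at hbK
    obtain ⟨c, hcC, rfl⟩ := hbK
    refine mem_iUnion.2 ⟨⟨c, hcC⟩, ?_⟩
    rw [mem_ball]
    exact hub
  obtain ⟨t, ht⟩ := hScpt.elim_finite_subcover (fun c : ↥C => ball (L c.1) γ)
    (fun _ => isOpen_ball) hcover
  refine ⟨1 + ∑ c ∈ t, ‖c.1‖, le_add_of_nonneg_right (Finset.sum_nonneg fun _ _ => norm_nonneg _), ?_⟩
  intro k hk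
  rcases eq_or_ne k 0 with rfl | hk0
  · exact ⟨0, hC.1, by simp, by simp⟩
  · have hknorm : 0 < ‖k‖ := norm_pos_iff.2 hk0
    have huK : ‖k‖⁻¹ • k ∈ K := by
      rw [hK] at hk ⊢
      obtain ⟨c0, hc0C, hc0⟩ := hk
      exact ⟨‖k‖⁻¹ • c0, hC.2.2 _ (by positivity) c0 hc0C, by rw [map_smul, hc0]⟩
    have huS : ‖k‖⁻¹ • k ∈ S := by
      refine ⟨subset_closure huK, ?_⟩
      simp [norm_smul, abs_of_pos (inv_pos.2 hknorm), inv_mul_cancel₀ hknorm.ne']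
    obtain ⟨c, hct, hcu⟩ := mem_iUnion₂.1 (ht huS)
    refine ⟨‖k‖ • c.1, hC.2.2 _ (norm_nonneg k) _ c.2, ?_, ?_⟩
    · rw [norm_smul, norm_norm, mul_comm]
      have : ‖c.1‖ ≤ 1 + ∑ c ∈ t, ‖c.1‖ := by
        have := Finset.single_le_sum (f := fun c : ↥C => ‖c.1‖)
          (fun _ _ => norm_nonneg _) hct
        linarith
      exact mul_le_mul_of_nonneg_right this hknorm.le
    · have h1 : L (‖k‖ • c.1) - k = ‖k‖ • (L c.1 - ‖k‖⁻¹ • k) := by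
        rw [smul_sub, map_smul, smul_smul, mul_inv_cancel₀ hknorm.ne', one_smul]
      rw [h1, norm_smul, norm_norm, mul_comm]
      have : ‖L c.1 - ‖k‖⁻¹ • k‖ ≤ γ := by
        rw [mem_ball, dist_comm] at hcu
        rw [← dist_eq_norm]
        exact hcu.le
      exact mul_le_mul_of_nonneg_right this hknorm.le

lemma comb_bound {ι : Type*} {E : Type*} [NormedAddCommGroup E] [NormedSpace ℝ E]
    (T : Finset ι) (w : ι → ℝ) (v : ι → E) (B : ℝ)
    (hw : ∀ i ∈ T, 0 ≤ w i) (hs : ∑ i ∈ T, w i = 1) (hv : ∀ i ∈ T, ‖v i‖ ≤ B) :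
    ‖∑ i ∈ T, w i • v i‖ ≤ B := by
  calc ‖∑ i ∈ T, w i • v i‖ ≤ ∑ i ∈ T, ‖w i • v i‖ := norm_sum_le _ _
    _ = ∑ i ∈ T, w i * ‖v i‖ := by
        refine Finset.sum_congr rfl fun i hi => ?_
        rw [norm_smul, Real.norm_of_nonneg (hw i hi)]
    _ ≤ ∑ i ∈ T, w i * B := by
        refine Finset.sum_le_sum fun i hi => mul_le_mul_of_nonneg_left (hv i hi) (hw i hi)
    _ = B := by rw [← Finset.sum_mul, hs, one_mul]

lemma half_pow_sub_one (j : ℕ) : (1/2 : ℝ) ^ (j - 1) ≤ 2 * (1/2 : ℝ) ^ j := by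
  cases j with
  | zero => norm_num
  | succ i =>
    simp only [Nat.add_sub_cancel, pow_succ]
    ring_nf
    nlinarith [pow_pos (by norm_num : (0:ℝ) < 1/2) i]

set_option maxHeartbeats 2000000 in
lemma boltyanski_forward {n : ℕ} (A : Set (EuclideanSpace ℝ (Fin n)))
    (y : EuclideanSpace ℝ (Fin n)) (hy : y ∈ A)
    (K : Set (EuclideanSpace ℝ (Fin n))) (h : IsBoltyanskiCone A y K) :
    ∃ ε : ℝ, 0 < ε ∧ ∃ G : EuclideanSpace ℝ (Fin n) → EuclideanSpace ℝ (Fin n),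
      ContinuousOn G (K ∩ closedBall 0 ε) ∧
      (∀ k ∈ K ∩ closedBall 0 ε, G k ∈ A) ∧ G 0 = y ∧
      (fun k => G k - y - k) =o[𝓝[K ∩ closedBall 0 ε] 0] (fun k => k) := by
  classical
  obtain ⟨m, C, L, δ, F, hC, hKL, hδ, hFc, hFA, hF0, hFo⟩ := h
  -- Step A : uniform approximate preimages at each tolerance level
  have hRex : ∀ j : ℕ, ∃ R : ℝ, 1 ≤ R ∧ ∀ k ∈ K, ∃ c ∈ C,
      ‖c‖ ≤ R * ‖k‖ ∧ ‖L c - k‖ ≤ (1/2 : ℝ)^j * ‖k‖ :=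
    fun j => approx_lemma hC L hKL (by positivity)
  choose R hR1 hRp using hRex
  set Rm : ℕ → ℝ := fun j => ∑ i ∈ Finset.range (j+1), R i with hRmdef
  have hRmpos : ∀ j, 0 < Rm j := by
    intro j
    refine Finset.sum_pos (fun i _ => lt_of_lt_of_le one_pos (hR1 i)) ⟨0, Finset.mem_range.2 (by omega)⟩
  have hRm_mono : Monotone Rm := by
    intro a b hab
    refine Finset.sum_le_sum_of_subset_of_nonneg (Finset.range_subset_range.2 (by omega))
      (fun i _ _ => le_trans zero_le_one (hR1 i))
  have hRRm : ∀ j, R j ≤ Rm j := fun j =>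
    Finset.single_le_sum (f := R) (fun i _ => le_trans zero_le_one (hR1 i))
      (Finset.self_mem_range_succ j)
  -- Step B : moduli for the little-o of F
  have hηex : ∀ j : ℕ, ∃ η > 0, ∀ c ∈ C ∩ closedBall 0 δ, ‖c‖ ≤ η →
      ‖F c - y - L c‖ ≤ ((1/2 : ℝ)^j / Rm (j+2)) * ‖c‖ := by
    intro j
    have hpos : (0:ℝ) < (1/2 : ℝ)^j / Rm (j+2) := div_pos (by positivity) (hRmpos _)
    have hev := hFo.def hpos
    rw [eventually_iff, Metric.mem_nhdsWithin_iff] at hev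
    obtain ⟨ρ, hρ, hball⟩ := hev
    refine ⟨ρ/2, by positivity, fun c hc hcn => ?_⟩
    have : c ∈ ball (0 : EuclideanSpace ℝ (Fin m)) ρ ∩ (C ∩ closedBall 0 δ) := by
      refine ⟨?_, hc⟩
      rw [mem_ball, dist_zero_right]
      linarith
    exact hball this
  choose η hηpos hηp using hηex
  set ηm : ℕ → ℝ := fun j => min δ ((Finset.range (j+1)).inf' Finset.nonempty_range_add_one η)
    with hηmdef
  have hηm_pos : ∀ j, 0 < ηm j := fun j =>
    lt_min hδ ((Finset.lt_inf'_iff _).2 fun i _ => hηpos i)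
  have hηm_le_δ : ∀ j, ηm j ≤ δ := fun j => min_le_left _ _
  have hηm_le : ∀ j, ηm j ≤ η j := fun j =>
    (min_le_right _ _).trans (Finset.inf'_le _ (Finset.self_mem_range_succ j))
  have hηm_anti : Antitone ηm := by
    refine antitone_nat_of_succ_le fun j => min_le_min le_rfl ?_
    rw [Finset.le_inf'_iff]
    intro i hi
    exact Finset.inf'_le _ (Finset.mem_range.2 (by simp at hi; omega))
  -- Step C : scale sequence t
  set t : ℕ → ℝ := fun j => Nat.rec (min 1 (ηm 0 / Rm 2))
    (fun i prev => min (prev / 2) (ηm (i+1) / Rm (i+3))) j with htdef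
  have ht0 : t 0 = min 1 (ηm 0 / Rm 2) := rfl
  have htsucc : ∀ j, t (j+1) = min (t j / 2) (ηm (j+1) / Rm (j+3)) := fun j => rfl
  have htpos : ∀ j, 0 < t j := by
    intro j
    induction j with
    | zero => rw [ht0]; exact lt_min one_pos (div_pos (hηm_pos 0) (hRmpos 2))
    | succ i ih => rw [htsucc]; exact lt_min (by linarith) (div_pos (hηm_pos _) (hRmpos _))
  have hthalf : ∀ j, t (j+1) ≤ t j / 2 := fun j => (htsucc j) ▸ min_le_left _ _
  have htRη : ∀ j, t j * Rm (j+2) ≤ ηm j := by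
    intro j
    have h1 : t j ≤ ηm j / Rm (j+2) := by
      cases j with
      | zero => rw [ht0]; exact min_le_right _ _
      | succ i => rw [htsucc]; exact min_le_right _ _
    exact (le_div_iff₀ (hRmpos _)).1 h1
  have htanti : Antitone t := by
    refine antitone_nat_of_succ_le fun j => (hthalf j).trans (by linarith [htpos j])
  have htlt : ∀ x : ℝ, 0 < x → ∃ j, t (j+1) < x := by
    have hb : ∀ j, t j ≤ t 0 * (1/2 : ℝ)^j := by
      intro j
      induction j with
      | zero => simp
      | succ i ih =>
        calc t (i+1) ≤ t i / 2 := hthalf i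
          _ ≤ (t 0 * (1/2 : ℝ)^i) / 2 := by linarith
          _ = t 0 * (1/2 : ℝ)^(i+1) := by ring
    intro x hx
    obtain ⟨j, hj⟩ := exists_pow_lt_of_lt_one (div_pos hx (htpos 0)) (by norm_num : (1/2 : ℝ) < 1)
    refine ⟨j, ?_⟩
    have h1 : t 0 * (1/2 : ℝ)^j < x := by
      have h2 : (1/2:ℝ)^j * t 0 < x := (lt_div_iff₀ (htpos 0)).1 hj
      linarith [mul_comm (t 0) ((1/2:ℝ)^j)]
    calc t (j+1) ≤ t j / 2 := hthalf j
      _ ≤ t j := by linarith [htpos j]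
      _ ≤ t 0 * (1/2:ℝ)^j := hb j
      _ < x := h1
  -- level function
  set lev : EuclideanSpace ℝ (Fin n) → ℕ := fun k => sInf {j | t (j+1) < ‖k‖} with hlevdef
  have hlev1 : ∀ k : EuclideanSpace ℝ (Fin n), k ≠ 0 → t (lev k + 1) < ‖k‖ := by
    intro k hk
    exact Nat.sInf_mem (htlt _ (norm_pos_iff.2 hk))
  have hlev2 : ∀ k : EuclideanSpace ℝ (Fin n), ‖k‖ ≤ t 0 → ‖k‖ ≤ t (lev k) := by
    intro k hk0
    cases hl : lev k with
    | zero => exact hk0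
    | succ i =>
      have hi : i < lev k := hl ▸ Nat.lt_succ_self i
      have hnm := Nat.notMem_of_lt_sInf hi
      exact not_lt.1 (by simpa using hnm)
  have hlev3 : ∀ (k : EuclideanSpace ℝ (Fin n)) (J : ℕ), k ≠ 0 → ‖k‖ ≤ t J → J ≤ lev k := by
    intro k J hk hkJ
    by_contra hlt
    push_neg at hlt
    have h1 : t J ≤ t (lev k + 1) := htanti (Nat.succ_le_of_lt hlt)
    linarith [hlev1 k hk]
  -- the punctured domain
  set S' : Set (EuclideanSpace ℝ (Fin n)) := (K ∩ closedBall 0 (t 0)) \ {0} with hS'def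
  have hxk : ∀ x : S', (x : EuclideanSpace ℝ (Fin n)) ∈ K := fun x => x.2.1.1
  have hxne : ∀ x : S', (x : EuclideanSpace ℝ (Fin n)) ≠ 0 := by
    intro x
    have := x.2.2
    simpa using this
  have hxt0 : ∀ x : S', ‖(x : EuclideanSpace ℝ (Fin n))‖ ≤ t 0 := by
    intro x
    have := x.2.1.2
    rwa [mem_closedBall, dist_zero_right] at this
  choose c hcC hcn hcL using fun x : S' => hRp (lev x.1) x.1 (hxk x)
  set U : S' → Set S' := fun i =>
    {x : S' | ‖(x : EuclideanSpace ℝ (Fin n)) - i.1‖ < (1/2 : ℝ)^(lev i.1) * ‖i.1‖ / 4} with hUdef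
  have hUopen : ∀ i, IsOpen (U i) := by
    intro i
    have : U i = Subtype.val ⁻¹' (ball i.1 ((1/2 : ℝ)^(lev i.1) * ‖i.1‖ / 4)) := by
      ext x
      simp [hUdef, mem_ball, dist_eq_norm]
      rw [Subtype.dist_eq, dist_eq_norm]
    rw [this]
    exact isOpen_ball.preimage continuous_subtype_val
  have hUcover : (univ : Set S') ⊆ ⋃ i, U i := by
    intro x _
    have hpos : 0 < (1/2 : ℝ)^(lev x.1) * ‖x.1‖ / 4 := by
      have := norm_pos_iff.2 (hxne x)
      positivity
    exact mem_iUnion.2 ⟨x, by simpa [hUdef] using hpos⟩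
  obtain ⟨f, hfsub⟩ := PartitionOfUnity.exists_isSubordinate isClosed_univ U hUopen hUcover
  set r : S' → EuclideanSpace ℝ (Fin m) := fun x => ∑ᶠ i, f i x • c i with hrdef
  have hrcont : Continuous r := f.continuous_finsum_smul (fun i x _ => continuousAt_const)
  -- the key pointwise estimate
  have key : ∀ x : S', r x ∈ C ∩ closedBall 0 δ ∧
      ‖F (r x) - y - x.1‖ ≤ 6 * (1/2 : ℝ)^(lev x.1) * ‖x.1‖ := by
    intro x
    have hknorm : 0 < ‖x.1‖ := norm_pos_iff.2 (hxne x)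
    have hkt0 : ‖x.1‖ ≤ t 0 := hxt0 x
    set k := x.1 with hkdef
    set j := lev k with hjdef
    set T := f.finsupport x with hTdef
    have hsum1 : ∑ i ∈ T, f i x = 1 := f.sum_finsupport (mem_univ x)
    have hrx : r x = ∑ i ∈ T, f i x • c i :=
      (f.sum_finsupport_smul_eq_finsum (x₀ := x) (fun i _ => c i)).symm
    have hwnn : ∀ i ∈ T, 0 ≤ f i x := fun i _ => f.nonneg i x
    have hk_lev1 : t (j+1) < ‖k‖ := hlev1 k (hxne x)
    have hk_lev2 : ‖k‖ ≤ t j := hlev2 k hkt0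
    have hperi : ∀ i ∈ T, ‖c i‖ ≤ ηm (j-1) ∧ ‖c i‖ ≤ 4/3 * Rm (j+1) * ‖k‖ ∧
        ‖L (c i) - k‖ ≤ 10/3 * (1/2 : ℝ)^j * ‖k‖ := by
      intro i hiT
      have hfi : f i x ≠ 0 := by
        rw [hTdef, PartitionOfUnity.mem_finsupport, Function.mem_support] at hiT
        exact hiT
      have hxU : x ∈ U i := hfsub i (subset_tsupport _ (Function.mem_support.2 hfi))
      have hdist : ‖k - i.1‖ < (1/2 : ℝ)^(lev i.1) * ‖i.1‖ / 4 := hxU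
      set ji := lev i.1 with hjidef
      have hinorm : 0 < ‖i.1‖ := norm_pos_iff.2 (hxne i)
      have hit0 : ‖i.1‖ ≤ t 0 := hxt0 i
      have hpow1 : (1/2 : ℝ)^ji ≤ 1 := pow_le_one₀ (by norm_num) (by norm_num)
      have hdist4 : ‖k - i.1‖ ≤ ‖i.1‖ / 4 := by nlinarith [norm_nonneg (k - i.1)]
      have habs1 : ‖i.1‖ - ‖k‖ ≤ ‖k - i.1‖ := by
        have := norm_sub_norm_le (i.1) k
        rwa [norm_sub_rev] at this
      have habs2 : ‖k‖ - ‖i.1‖ ≤ ‖k - i.1‖ := norm_sub_norm_le k i.1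
      have h43 : ‖i.1‖ ≤ 4/3 * ‖k‖ := by linarith
      have h54 : ‖k‖ ≤ 5/4 * ‖i.1‖ := by linarith
      have hji_lev1 : t (ji+1) < ‖i.1‖ := hlev1 i.1 (hxne i)
      have hji_lev2 : ‖i.1‖ ≤ t ji := hlev2 i.1 hit0
      have hj1 : j ≤ ji + 1 := by
        by_contra hcon
        push_neg at hcon
        have h1 : t j ≤ t (ji + 2) := htanti (show ji + 2 ≤ j by omega)
        have h2 : t (ji + 2) ≤ t (ji + 1) / 2 := hthalf (ji+1)
        linarith
      have hj2 : ji ≤ j + 1 := by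
        by_contra hcon
        push_neg at hcon
        have h1 : t ji ≤ t (j + 2) := htanti (show j + 2 ≤ ji by omega)
        have h2 : t (j + 2) ≤ t (j + 1) / 2 := hthalf (j+1)
        linarith
      have hji1 : j - 1 ≤ ji := by omega
      refine ⟨?_, ?_, ?_⟩
      · calc ‖c i‖ ≤ R ji * ‖i.1‖ := hcn i
          _ ≤ Rm (ji+2) * t ji := by
              refine mul_le_mul ((hRRm ji).trans (hRm_mono (by omega))) hji_lev2
                hinorm.le (hRmpos _).le
          _ = t ji * Rm (ji+2) := mul_comm _ _
          _ ≤ ηm ji := htRη ji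
          _ ≤ ηm (j-1) := hηm_anti hji1
      · calc ‖c i‖ ≤ R ji * ‖i.1‖ := hcn i
          _ ≤ Rm (j+1) * (4/3 * ‖k‖) := by
              refine mul_le_mul ((hRRm ji).trans (hRm_mono (by omega))) h43
                hinorm.le (hRmpos _).le
          _ = 4/3 * Rm (j+1) * ‖k‖ := by ring
      · have hpowji : (1/2 : ℝ)^ji ≤ 2 * (1/2 : ℝ)^j := by
          have h1 : (1/2 : ℝ)^ji ≤ (1/2 : ℝ)^(j-1) :=
            pow_le_pow_of_le_one (by norm_num) (by norm_num) hji1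
          linarith [half_pow_sub_one j]
        have htri : ‖L (c i) - k‖ ≤ ‖L (c i) - i.1‖ + ‖i.1 - k‖ := by
          have := dist_triangle (L (c i)) i.1 k
          simpa [dist_eq_norm] using this
        have h2 : ‖i.1 - k‖ ≤ (1/2:ℝ)^ji * ‖i.1‖ / 4 := by
          rw [norm_sub_rev]
          exact hdist.le
        have h3 : ‖L (c i) - i.1‖ ≤ (1/2:ℝ)^ji * ‖i.1‖ := hcL i
        have hpj : (0:ℝ) < (1/2:ℝ)^ji := by positivity
        have hpj' : (0:ℝ) < (1/2:ℝ)^j := by positivity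
        calc ‖L (c i) - k‖ ≤ (1/2:ℝ)^ji * ‖i.1‖ + (1/2:ℝ)^ji * ‖i.1‖ / 4 := by linarith
          _ = 5/4 * ((1/2:ℝ)^ji * ‖i.1‖) := by ring
          _ ≤ 5/4 * ((2 * (1/2:ℝ)^j) * (4/3 * ‖k‖)) := by
              refine mul_le_mul_of_nonneg_left ?_ (by norm_num)
              exact mul_le_mul hpowji h43 hinorm.le (by positivity)
          _ = 10/3 * (1/2:ℝ)^j * ‖k‖ := by ring
    have hrnorm1 : ‖r x‖ ≤ ηm (j-1) := by
      rw [hrx]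
      exact comb_bound T _ _ _ hwnn hsum1 (fun i hi => (hperi i hi).1)
    have hrnorm2 : ‖r x‖ ≤ 4/3 * Rm (j+1) * ‖k‖ := by
      rw [hrx]
      exact comb_bound T _ _ _ hwnn hsum1 (fun i hi => (hperi i hi).2.1)
    have hrC : r x ∈ C := by
      rw [hrx]
      exact hC.2.1.sum_mem hwnn hsum1 (fun i _ => hcC i)
    have hrδ : r x ∈ closedBall 0 δ := by
      rw [mem_closedBall, dist_zero_right]
      exact hrnorm1.trans (hηm_le_δ _)
    have hLr : ‖L (r x) - k‖ ≤ 10/3 * (1/2:ℝ)^j * ‖k‖ := by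
      have h1 : L (r x) - k = ∑ i ∈ T, f i x • (L (c i) - k) := by
        rw [hrx, map_sum]
        simp only [map_smul, smul_sub]
        rw [Finset.sum_sub_distrib, ← Finset.sum_smul, hsum1, one_smul]
      rw [h1]
      exact comb_bound T _ _ _ hwnn hsum1 (fun i hi => (hperi i hi).2.2)
    have hFrem : ‖F (r x) - y - L (r x)‖ ≤ 8/3 * (1/2:ℝ)^j * ‖k‖ := by
      have happ := hηp (j-1) (r x) ⟨hrC, hrδ⟩ (hrnorm1.trans (hηm_le _))
      have hRmle : Rm (j+1) ≤ Rm (j-1+2) := hRm_mono (by omega)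
      have hq : Rm (j+1) / Rm (j-1+2) ≤ 1 := div_le_one_of_le₀ hRmle (hRmpos _).le
      calc ‖F (r x) - y - L (r x)‖ ≤ ((1/2:ℝ)^(j-1) / Rm (j-1+2)) * ‖r x‖ := happ
        _ ≤ ((1/2:ℝ)^(j-1) / Rm (j-1+2)) * (4/3 * Rm (j+1) * ‖k‖) := by
            refine mul_le_mul_of_nonneg_left hrnorm2 (div_nonneg (by positivity) (hRmpos _).le)
        _ = (1/2:ℝ)^(j-1) * (Rm (j+1) / Rm (j-1+2)) * (4/3 * ‖k‖) := by ring
        _ ≤ (2 * (1/2:ℝ)^j) * 1 * (4/3 * ‖k‖) := by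
            refine mul_le_mul (mul_le_mul (half_pow_sub_one j) hq
              (div_nonneg (hRmpos _).le (hRmpos _).le) (by positivity)) le_rfl
              (by positivity) (by positivity)
        _ = 8/3 * (1/2:ℝ)^j * ‖k‖ := by ring
    refine ⟨⟨hrC, hrδ⟩, ?_⟩
    have hsplit : F (r x) - y - k = (F (r x) - y - L (r x)) + (L (r x) - k) := by abel
    calc ‖F (r x) - y - k‖ = ‖(F (r x) - y - L (r x)) + (L (r x) - k)‖ := by rw [hsplit]
      _ ≤ ‖F (r x) - y - L (r x)‖ + ‖L (r x) - k‖ := norm_add_le _ _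
      _ ≤ 8/3 * (1/2:ℝ)^j * ‖k‖ + 10/3 * (1/2:ℝ)^j * ‖k‖ := add_le_add hFrem hLr
      _ = 6 * (1/2:ℝ)^j * ‖k‖ := by ring
  -- define G
  set G : EuclideanSpace ℝ (Fin n) → EuclideanSpace ℝ (Fin n) :=
    fun k => if h : k ∈ S' then F (r ⟨k, h⟩) else y with hGdef
  have hG0 : G 0 = y := by
    rw [hGdef]
    exact dif_neg (by simp [hS'def])
  have hGS' : ∀ (k) (h : k ∈ S'), G k = F (r ⟨k, h⟩) := fun k h => dif_pos h
  have hGbound : ∀ k ∈ K ∩ closedBall 0 (t 0),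
      ‖G k - y - k‖ ≤ 6 * (1/2:ℝ)^(lev k) * ‖k‖ := by
    intro k hk
    by_cases h : k ∈ S'
    · rw [hGS' k h]
      exact (key ⟨k, h⟩).2
    · have hk0 : k = 0 := by
        by_contra hne
        exact h ⟨hk, by simpa using hne⟩
      subst hk0
      rw [hG0]
      simp
  have hGA : ∀ k ∈ K ∩ closedBall 0 (t 0), G k ∈ A := by
    intro k hk
    by_cases h : k ∈ S'
    · rw [hGS' k h]
      exact hFA _ (key ⟨k, h⟩).1
    · have hk0 : k = 0 := by
        by_contra hne
        exact h ⟨hk, by simpa using hne⟩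
      subst hk0
      rw [hG0]
      exact hy
  have hGS'cont : ContinuousOn G S' := by
    rw [continuousOn_iff_continuous_restrict]
    have hres : S'.domRestrict G = F ∘ (fun x : S' => r x) := by
      funext x
      simp only [domRestrict_apply, Function.comp_apply]
      rw [hGS' x.1 x.2, Subtype.coe_eta]
    rw [hres]
    exact hFc.comp_continuous hrcont (fun x => (key x).1)
  have hGcont : ContinuousOn G (K ∩ closedBall 0 (t 0)) := by
    intro k hk
    by_cases hk0 : k = 0
    · subst hk0
      rw [ContinuousWithinAt, hG0]
      rw [tendsto_iff_norm_sub_tendsto_zero]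
      refine squeeze_zero' (g := fun k : EuclideanSpace ℝ (Fin n) => 7 * ‖k‖)
        (Eventually.of_forall fun _ => norm_nonneg _) ?_ ?_
      · filter_upwards [self_mem_nhdsWithin] with k hkS
        have hb := hGbound k hkS
        have hpow : (1/2:ℝ)^(lev k) ≤ 1 := pow_le_one₀ (by norm_num) (by norm_num)
        have htri : ‖G k - y‖ ≤ ‖G k - y - k‖ + ‖k‖ := by
          have hna := norm_add_le (G k - y - k) k
          have he : G k - y - k + k = G k - y := by abel
          rwa [he] at hna
        have : 6 * (1/2:ℝ)^(lev k) * ‖k‖ ≤ 6 * ‖k‖ := by nlinarith [norm_nonneg k]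
        calc ‖G k - y‖ ≤ ‖G k - y - k‖ + ‖k‖ := htri
          _ ≤ 6 * ‖k‖ + ‖k‖ := by linarith
          _ = 7 * ‖k‖ := by ring
      · have h1 : Tendsto (fun k : EuclideanSpace ℝ (Fin n) => 7 * ‖k‖) (𝓝 0) (𝓝 0) := by
          have hco : Continuous (fun k : EuclideanSpace ℝ (Fin n) => 7 * ‖k‖) :=
            continuous_const.mul continuous_norm
          have h2 := hco.tendsto (0 : EuclideanSpace ℝ (Fin n))
          simpa using h2
        exact h1.mono_left nhdsWithin_le_nhds
    · have hkS' : k ∈ S' := ⟨hk, by simpa using hk0⟩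
      have h1 : ContinuousWithinAt G S' k := hGS'cont k hkS'
      have hfilter : 𝓝[K ∩ closedBall 0 (t 0)] k = 𝓝[S'] k := by
        rw [hS'def, diff_eq]
        exact nhdsWithin_restrict' _ (compl_singleton_mem_nhds hk0)
      rw [ContinuousWithinAt, hfilter]
      exact h1
  have hGo : (fun k => G k - y - k) =o[𝓝[K ∩ closedBall 0 (t 0)] 0]
      (fun k : EuclideanSpace ℝ (Fin n) => k) := by
    rw [isLittleO_iff]
    intro γ hγ
    obtain ⟨J, hJ⟩ : ∃ J : ℕ, 6 * (1/2:ℝ)^J ≤ γ := by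
      obtain ⟨J, hJ⟩ := exists_pow_lt_of_lt_one (show (0:ℝ) < γ/6 by positivity)
        (by norm_num : (1/2:ℝ) < 1)
      exact ⟨J, by linarith⟩
    have hmem : closedBall (0 : EuclideanSpace ℝ (Fin n)) (t J) ∈
        𝓝[K ∩ closedBall 0 (t 0)] 0 :=
      mem_nhdsWithin_of_mem_nhds (closedBall_mem_nhds _ (htpos J))
    filter_upwards [hmem, self_mem_nhdsWithin] with k hk1 hk2
    by_cases hk0 : k = 0
    · subst hk0
      simp [hG0]
    · have hkt : ‖k‖ ≤ t J := by rwa [mem_closedBall, dist_zero_right] at hk1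
      have hJle : J ≤ lev k := hlev3 k J hk0 hkt
      have h2 : (1/2:ℝ)^(lev k) ≤ (1/2:ℝ)^J :=
        pow_le_pow_of_le_one (by norm_num) (by norm_num) hJle
      calc ‖G k - y - k‖ ≤ 6 * (1/2:ℝ)^(lev k) * ‖k‖ := hGbound k hk2
        _ ≤ γ * ‖k‖ := by nlinarith [norm_nonneg k]
  exact ⟨t 0, htpos 0, G, hGcont, hGA, hG0, hGo⟩

/-- Equivalent definition of a Boltyanski approximating cone. -/
theorem boltyanski_iff {n : ℕ} (A : Set (EuclideanSpace ℝ (Fin n)))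
    (y : EuclideanSpace ℝ (Fin n)) (hy : y ∈ A)
    (K : Set (EuclideanSpace ℝ (Fin n))) (hK : IsConvexCone K) :
    IsBoltyanskiCone A y K ↔
      ∃ ε : ℝ, 0 < ε ∧ ∃ G : EuclideanSpace ℝ (Fin n) → EuclideanSpace ℝ (Fin n),
        ContinuousOn G (K ∩ closedBall 0 ε) ∧
        (∀ k ∈ K ∩ closedBall 0 ε, G k ∈ A) ∧ G 0 = y ∧
        (fun k => G k - y - k) =o[𝓝[K ∩ closedBall 0 ε] 0] (fun k => k) := by
  constructor
  · exact boltyanski_forward A y hy K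
  · rintro ⟨ε, hε, G, hGc, hGA, hG0, hGo⟩
    refine ⟨n, K, LinearMap.id, ε, G, hK, by simp, hε, hGc, hGA, hG0, ?_⟩
    simpa using hGo
end

section
/- If K is a Boltyanski approximating cone to a set A ⊆ ℝⁿ at a point y ∈ A, then every convex subcone K̂ ⊆ K is also a Boltyanski approximating cone to A at y. -/
open Set Metric Filter Asymptotics Topology

/-- Every convex subcone of a Boltyanski approximating cone is itself a
Boltyanski approximating cone. -/
theorem boltyanski_subcone {n : ℕ} (A : Set (EuclideanSpace ℝ (Fin n)))
    (y : EuclideanSpace ℝ (Fin n))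
    (K K' : Set (EuclideanSpace ℝ (Fin n)))
    (hK : IsBoltyanskiCone A y K) (hsub : K' ⊆ K) (hK' : IsConvexCone K') :
    IsBoltyanskiCone A y K' := by
  obtain ⟨m, C, L, δ, F, ⟨hC0, hCconv, hCcone⟩, hKL, hδ, hFcont, hFA, hF0, hFo⟩ := hK
  obtain ⟨hK'0, hK'conv, hK'cone⟩ := hK'
  refine ⟨m, C ∩ ⇑L ⁻¹' K', L, δ, F, ⟨⟨hC0, by simp [hK'0]⟩, ?_, ?_⟩, ?_, hδ, ?_, ?_, hF0, ?_⟩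
  · exact hCconv.inter (hK'conv.linear_preimage L)
  · rintro r hr c ⟨hcC, hcK'⟩
    exact ⟨hCcone r hr c hcC, by simpa [map_smul] using hK'cone r hr _ hcK'⟩
  · apply Subset.antisymm
    · intro x hx
      obtain ⟨c, hcC, rfl⟩ := hKL ▸ hsub hx
      exact ⟨c, ⟨hcC, hx⟩, rfl⟩
    · rintro _ ⟨c, ⟨_, hc⟩, rfl⟩; exact hc
  · exact hFcont.mono (inter_subset_inter_left _ inter_subset_left)
  · exact fun c hc => hFA c ⟨hc.1.1, hc.2⟩
  · exact hFo.mono (nhdsWithin_mono _ (inter_subset_inter_left _ inter_subset_left))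
end

section
/- Let φ₁,…,φ_k : ℝⁿ → ℝ be C¹ maps, let A = {x ∈ ℝⁿ : φ₁(x) = 0, …, φ_k(x) = 0}, and let y ∈ A be a point at which the gradients ∇φ₁(y), …, ∇φ_k(y) are linearly independent. Then the subspace {w ∈ ℝⁿ : ∇φ_i(y)·w = 0 for all i = 1,…,k} is a Boltyanski approximating cone to A at y. -/
open Set Metric Filter Asymptotics Topology

set_option maxHeartbeats 1000000 in
/-- The tangent space to the zero set of `k` functionals with linearly independent
gradients is a Boltyanski approximating cone. -/
theorem boltyanski_of_level_set {n k : ℕ}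
    (φ : Fin k → EuclideanSpace ℝ (Fin n) → ℝ)
    (hφ : ∀ i, ContDiff ℝ 1 (φ i))
    (y : EuclideanSpace ℝ (Fin n))
    (hy : ∀ i, φ i y = 0)
    (hind : LinearIndependent ℝ (fun i => fderiv ℝ (φ i) y)) :
    IsBoltyanskiCone {x | ∀ i, φ i x = 0} y
      {w | ∀ i, fderiv ℝ (φ i) y w = 0} := by
  classical
  set D : Fin k → (EuclideanSpace ℝ (Fin n) →L[ℝ] ℝ) := fun i => fderiv ℝ (φ i) y with hD
  set Φ : EuclideanSpace ℝ (Fin n) → (Fin k → ℝ) := fun x i => φ i x with hΦdef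
  set f' : EuclideanSpace ℝ (Fin n) →L[ℝ] (Fin k → ℝ) := ContinuousLinearMap.pi D with hf'
  have hΦ' : HasStrictFDerivAt Φ f' y := by
    apply hasStrictFDerivAt_pi.2
    intro i
    exact ((hφ i).contDiffAt (x := y)).hasStrictFDerivAt one_ne_zero
  -- surjectivity of the derivative
  have hsurj : f'.range = ⊤ := by
    by_contra h
    obtain ⟨Λ, h0, hΛ⟩ := Submodule.exists_le_ker_of_lt_top _ (lt_top_iff_ne_top.2 h)
    rcases (LinearEquiv.piRing ℝ ℝ (Fin k) ℝ).symm.surjective Λ with ⟨c, rfl⟩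
    have hc : ∀ x : EuclideanSpace ℝ (Fin n), ∑ i, (f' x i) • c i = 0 := by
      intro x
      have hx := hΛ (LinearMap.mem_range_self _ x)
      rw [LinearMap.mem_ker] at hx
      simpa [LinearEquiv.piRing_symm_apply] using hx
    have hsum : (∑ i, c i • D i) = 0 := by
      ext x
      have hx := hc x
      simp only [hf', ContinuousLinearMap.pi_apply, smul_eq_mul] at hx
      simp only [ContinuousLinearMap.coe_sum', Finset.sum_apply,
        ContinuousLinearMap.coe_smul', Pi.smul_apply, smul_eq_mul,
        ContinuousLinearMap.zero_apply]
      calc ∑ i, c i * D i x = ∑ i, D i x * c i := by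
            exact Finset.sum_congr rfl fun i _ => mul_comm _ _
        _ = 0 := hx
    have hzero : ∀ i, c i = 0 := Fintype.linearIndependent_iff.1 hind c hsum
    have hc0 : c = 0 := funext hzero
    rw [hc0, map_zero] at h0
    exact h0 rfl
  -- the kernel and projection
  set S : Set (EuclideanSpace ℝ (Fin n)) := {w | ∀ i, fderiv ℝ (φ i) y w = 0} with hS
  have hSker : ∀ c : EuclideanSpace ℝ (Fin n), c ∈ S ↔ c ∈ f'.ker := by
    intro c
    simp [hS, LinearMap.mem_ker, hf', funext_iff, hD]
  haveI : CompleteSpace (f'.ker) := FiniteDimensional.complete ℝ _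
  set P : EuclideanSpace ℝ (Fin n) →L[ℝ] f'.ker :=
    Submodule.orthogonalProjectionOnto (f'.ker) with hP
  set g := hΦ'.implicitFunction Φ f' hsurj with hg
  set H := hΦ'.implicitToOpenPartialHomeomorph Φ f' hsurj with hHdef
  have hcont0 : Filter.Tendsto
      (fun z : f'.ker => ((Φ y, z) : (Fin k → ℝ) × f'.ker))
      (𝓝 0) (𝓝 (Φ y, 0)) := (continuous_const.prodMk continuous_id).tendsto' 0 _ rfl
  have h1 : ∀ᶠ z : f'.ker in 𝓝 0, Φ (g (Φ y) z) = Φ y :=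
    hcont0.eventually (hΦ'.map_implicitFunction_eq hsurj)
  have h2 : ∀ᶠ z : f'.ker in 𝓝 0,
      ((Φ y, z) : (Fin k → ℝ) × f'.ker) ∈ H.target :=
    hcont0.eventually (H.open_target.mem_nhds (hΦ'.mem_implicitToOpenPartialHomeomorph_target hsurj))
  obtain ⟨ε, εpos, hε⟩ := Metric.eventually_nhds_iff_ball.1 (h1.and h2)
  -- choose δ
  have hPnorm : (0:ℝ) ≤ ‖P‖ := P.opNorm_nonneg
  set δ : ℝ := ε / (‖P‖ + 1) with hδdef
  have δpos : 0 < δ := div_pos εpos (by linarith)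
  have hsmall : ∀ c : EuclideanSpace ℝ (Fin n), ‖c‖ ≤ δ → ‖P c‖ < ε := by
    intro c hc
    have h1 : ‖P c‖ ≤ ‖P‖ * ‖c‖ := P.le_opNorm c
    have h2 : ‖P‖ * ‖c‖ ≤ ‖P‖ * δ := mul_le_mul_of_nonneg_left hc hPnorm
    have h3 : ‖P‖ * δ < ε := by
      rw [hδdef]
      have hlt : ‖P‖ / (‖P‖ + 1) < 1 := by
        rw [div_lt_one (by linarith)]; linarith
      calc ‖P‖ * (ε / (‖P‖ + 1)) = (‖P‖ / (‖P‖ + 1)) * ε := by ring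
        _ < 1 * ε := mul_lt_mul_of_pos_right hlt εpos
        _ = ε := one_mul ε
    linarith
  set F : EuclideanSpace ℝ (Fin n) → EuclideanSpace ℝ (Fin n) :=
    fun c => g (Φ y) (P c) with hF
  have hball : ∀ z : f'.ker, ‖z‖ < ε →
      Φ (g (Φ y) z) = Φ y ∧ ((Φ y, z) : (Fin k → ℝ) × f'.ker) ∈ H.target := by
    intro z hz
    refine hε z ?_
    rw [Metric.mem_ball, dist_zero_right]
    exact hz
  have hF0 : F 0 = y := by
    show g (Φ y) (P 0) = y
    rw [map_zero]
    exact hΦ'.implicitFunction_apply_image hsurj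
  have hPself : ∀ c ∈ S, ((P c : EuclideanSpace ℝ (Fin n))) = c := by
    intro c hc
    exact Submodule.starProjection_eq_self_iff.2 ((hSker c).1 hc)
  refine ⟨n, S, LinearMap.id, δ, F, ?_, ?_, δpos, ?_, ?_, hF0, ?_⟩
  · -- convex cone
    refine ⟨fun i => map_zero _, ?_, ?_⟩
    · intro a ha b hb s t hs ht hst i
      simp only [hS, Set.mem_setOf_eq] at ha hb ⊢
      simp [map_add, map_smul, ha i, hb i]
    · intro r hr c hc i
      simp only [hS, Set.mem_setOf_eq] at hc ⊢
      simp [map_smul, hc i]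
  · -- K = id '' S
    rw [LinearMap.id_coe, Set.image_id]
  · -- continuity
    have hmaps : Set.MapsTo
        (fun c => ((Φ y, P c) : (Fin k → ℝ) × f'.ker))
        (S ∩ closedBall 0 δ) H.target := by
      intro c hc
      have : ‖P c‖ < ε := hsmall c (by simpa [mem_closedBall, dist_zero_right] using hc.2)
      exact (hball _ this).2
    have hcont : ContinuousOn
        (fun c : EuclideanSpace ℝ (Fin n) => ((Φ y, P c) : (Fin k → ℝ) × f'.ker))
        (S ∩ closedBall 0 δ) := (continuous_const.prodMk P.continuous).continuousOn
    exact H.continuousOn_symm.comp hcont hmaps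
  · -- maps into A
    intro c hc
    have hlt : ‖P c‖ < ε := hsmall c (by simpa [mem_closedBall, dist_zero_right] using hc.2)
    have heq : Φ (F c) = Φ y := (hball _ hlt).1
    intro i
    have := congrFun heq i
    simpa [hΦdef, hy i] using this
  · -- little-o
    have hder : HasStrictFDerivAt (g (Φ y)) (f'.ker).subtypeL 0 :=
      hΦ'.to_implicitFunction hsurj
    have hcomp : HasFDerivAt F (((f'.ker).subtypeL).comp P) 0 := by
      have h0 : P (0 : EuclideanSpace ℝ (Fin n)) = 0 := map_zero P
      have hg' : HasFDerivAt (g (Φ y)) (f'.ker).subtypeL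
          (P (0 : EuclideanSpace ℝ (Fin n))) := by
        rw [h0]; exact hder.hasFDerivAt
      exact hg'.comp (0 : EuclideanSpace ℝ (Fin n)) P.hasFDerivAt
    have hlo : (fun c : EuclideanSpace ℝ (Fin n) =>
        F c - F 0 - ((f'.ker).subtypeL.comp P) c) =o[𝓝 0] fun c => c := by
      have := hasFDerivAt_iff_isLittleO_nhds_zero.1 hcomp
      simpa using this
    refine ((hlo.mono nhdsWithin_le_nhds).congr' ?_ EventuallyEq.rfl)
    filter_upwards [self_mem_nhdsWithin] with c hc
    have hc1 : ((P c : EuclideanSpace ℝ (Fin n))) = c := hPself c hc.1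
    simp only [ContinuousLinearMap.coe_comp', Function.comp_apply,
      Submodule.coe_subtypeL, Submodule.coe_subtype, LinearMap.id_coe, id_eq, hF0]
    rw [hc1]
end

section
/- Let φ₁,…,φ_k, h₁,…,h_r : ℝⁿ → ℝ be C¹ maps and let A = {x ∈ ℝⁿ : φ₁(x) = 0,…, φ_k(x) = 0, h₁(x) ≤ 0,…, h_r(x) ≤ 0}. Let y ∈ A and suppose that for a (possibly empty) subset {i₁,…,i_q} ⊆ {1,…,r} one has h_{i₁}(y) = 0, …, h_{i_q}(y) = 0, that h_j(y) < 0 for every j ∈ {1,…,r}\{i₁,…,i_q}, and that the gradients ∇h_{i₁}(y),…,∇h_{i_q}(y), ∇φ₁(y),…,∇φ_k(y) are linearly independent. Then the convex cone K = {w ∈ ℝⁿ : ∇φ_ℓ(y)·w = 0 for ℓ = 1,…,k and ∇h_{i_j}(y)·w ≤ 0 for j = 1,…,q} is a Boltyanski approximating cone to A at y. -/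
open Set Metric Filter Asymptotics Topology

private theorem surj_pi_of_linearIndependent {E : Type*} [NormedAddCommGroup E]
    [NormedSpace ℝ E] {ι : Type*} [Fintype ι]
    {lam : ι → (E →L[ℝ] ℝ)} (hind : LinearIndependent ℝ lam) :
    Function.Surjective (ContinuousLinearMap.pi lam) := by
  classical
  rw [← ContinuousLinearMap.coe_coe, ← LinearMap.range_eq_top]
  by_contra hne
  obtain ⟨f, hf0, hmap⟩ := Submodule.exists_dual_map_eq_bot_of_lt_top
    (lt_top_iff_ne_top.mpr hne) inferInstance
  set c : ι → ℝ := fun a => f (Pi.single a 1) with hc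
  have hfz : ∀ z : ι → ℝ, f z = ∑ a, z a * c a := by
    intro z
    rw [LinearMap.pi_apply_eq_sum_univ f z]
    refine Finset.sum_congr rfl fun a _ => ?_
    rw [smul_eq_mul]
    congr 1
    have : (fun j => if a = j then (1:ℝ) else 0) = Pi.single a 1 := by
      funext j; simp [Pi.single_apply, eq_comm]
    rw [this]
  have hzero : ∀ x : E, ∑ a, c a * lam a x = 0 := by
    intro x
    have hxr : (ContinuousLinearMap.pi lam) x ∈
        LinearMap.range (ContinuousLinearMap.pi lam : E →ₗ[ℝ] (ι → ℝ)) :=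
      LinearMap.mem_range_self _ x
    have hfx : f ((ContinuousLinearMap.pi lam) x) = 0 := by
      have := Submodule.mem_map_of_mem (f := f) hxr
      rw [hmap, Submodule.mem_bot] at this
      exact this
    rw [hfz] at hfx
    calc ∑ a, c a * lam a x = ∑ a, (ContinuousLinearMap.pi lam) x a * c a := by
          refine Finset.sum_congr rfl fun a _ => ?_
          simp [ContinuousLinearMap.pi_apply, mul_comm]
      _ = 0 := hfx
  have hsum : (∑ a, c a • lam a) = 0 := by
    ext x
    simpa [ContinuousLinearMap.sum_apply, smul_eq_mul] using hzero x
  have hc0 := Fintype.linearIndependent_iff.mp hind c hsum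
  apply hf0
  apply LinearMap.ext
  intro z
  rw [hfz]
  simp [hc0]


set_option maxHeartbeats 1000000 in
/-- Approximating cone to the intersection of level sets and sublevel sets:
Mangasarian–Fromovitz-type cone under linear independence of active gradients. -/
theorem boltyanski_of_sublevel_intersection {n k r : ℕ}
    (φ : Fin k → EuclideanSpace ℝ (Fin n) → ℝ)
    (h : Fin r → EuclideanSpace ℝ (Fin n) → ℝ)
    (hφ : ∀ i, ContDiff ℝ 1 (φ i)) (hh : ∀ j, ContDiff ℝ 1 (h j))
    (y : EuclideanSpace ℝ (Fin n))
    (hyφ : ∀ i, φ i y = 0) (hyh : ∀ j, h j y ≤ 0)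
    (I : Finset (Fin r))
    (hact : ∀ j ∈ I, h j y = 0)
    (hinact : ∀ j ∉ I, h j y < 0)
    (hind : LinearIndependent ℝ
      (Sum.elim (fun i : Fin k => fderiv ℝ (φ i) y)
        (fun j : {j // j ∈ I} => fderiv ℝ (h j) y))) :
    IsBoltyanskiCone
      {x | (∀ i, φ i x = 0) ∧ ∀ j, h j x ≤ 0} y
      {w | (∀ i, fderiv ℝ (φ i) y w = 0) ∧ ∀ j ∈ I, fderiv ℝ (h j) y w ≤ 0} := by
  classical
  set K : Set (EuclideanSpace ℝ (Fin n)) :=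
    {w | (∀ i, fderiv ℝ (φ i) y w = 0) ∧ ∀ j ∈ I, fderiv ℝ (h j) y w ≤ 0} with hKdef
  let lam : (Fin k ⊕ {j // j ∈ I}) → (EuclideanSpace ℝ (Fin n) →L[ℝ] ℝ) :=
    Sum.elim (fun i => fderiv ℝ (φ i) y) (fun j => fderiv ℝ (h j) y)
  let D : EuclideanSpace ℝ (Fin n) →L[ℝ] ((Fin k ⊕ {j // j ∈ I}) → ℝ) :=
    ContinuousLinearMap.pi lam
  have hDsurj : Function.Surjective D := surj_pi_of_linearIndependent hind
  let Kr : Submodule ℝ (EuclideanSpace ℝ (Fin n)) :=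
    LinearMap.ker (D : EuclideanSpace ℝ (Fin n) →ₗ[ℝ] ((Fin k ⊕ {j // j ∈ I}) → ℝ))
  let pr : EuclideanSpace ℝ (Fin n) →L[ℝ] Kr := Submodule.orthogonalProjectionOnto Kr
  let Tclm : EuclideanSpace ℝ (Fin n) →L[ℝ] (((Fin k ⊕ {j // j ∈ I}) → ℝ) × Kr) := D.prod pr
  have hTinj : Function.Injective
      (Tclm : EuclideanSpace ℝ (Fin n) →ₗ[ℝ] (((Fin k ⊕ {j // j ∈ I}) → ℝ) × Kr)) := by
    intro a b hab
    have h1 : D a = D b := congrArg Prod.fst hab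
    have h2 : pr a = pr b := congrArg Prod.snd hab
    have hmem : a - b ∈ Kr := by
      simp only [Kr, LinearMap.mem_ker, ContinuousLinearMap.coe_coe, map_sub, h1, sub_self]
    have hpr0 : pr (a - b) = 0 := by simp [pr, map_sub, h2]
    have hsf : ((pr (a - b) : Kr) : EuclideanSpace ℝ (Fin n)) = a - b :=
      Submodule.starProjection_eq_self_iff.mpr hmem
    rw [hpr0] at hsf
    have hz : a - b = 0 := by simpa using hsf.symm
    exact sub_eq_zero.mp hz
  have hrank : Module.finrank ℝ (EuclideanSpace ℝ (Fin n)) =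
      Module.finrank ℝ ((((Fin k ⊕ {j // j ∈ I}) → ℝ)) × Kr) := by
    have h1 := LinearMap.finrank_range_add_finrank_ker
      (D : EuclideanSpace ℝ (Fin n) →ₗ[ℝ] ((Fin k ⊕ {j // j ∈ I}) → ℝ))
    have h2 : LinearMap.range
        (D : EuclideanSpace ℝ (Fin n) →ₗ[ℝ] ((Fin k ⊕ {j // j ∈ I}) → ℝ)) = ⊤ :=
      LinearMap.range_eq_top.mpr hDsurj
    rw [h2, finrank_top] at h1
    rw [Module.finrank_prod]
    have h3 : LinearMap.ker
        (D : EuclideanSpace ℝ (Fin n) →ₗ[ℝ] ((Fin k ⊕ {j // j ∈ I}) → ℝ)) = Kr := rfl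
    rw [h3] at h1
    omega
  let Teq : EuclideanSpace ℝ (Fin n) ≃L[ℝ] (((Fin k ⊕ {j // j ∈ I}) → ℝ) × Kr) :=
    ((Tclm : EuclideanSpace ℝ (Fin n) →ₗ[ℝ]
        (((Fin k ⊕ {j // j ∈ I}) → ℝ) × Kr)).linearEquivOfInjective hTinj
      hrank).toContinuousLinearEquiv
  have hTeq : ∀ w, Teq w = Tclm w := fun w => by
    simp only [Teq, LinearEquiv.coe_toContinuousLinearEquiv',
      LinearMap.linearEquivOfInjective_apply, ContinuousLinearMap.coe_coe]
  have hTcoe : (Teq : EuclideanSpace ℝ (Fin n) →L[ℝ]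
      (((Fin k ⊕ {j // j ∈ I}) → ℝ) × Kr)) = Tclm :=
    ContinuousLinearMap.ext fun w => by rw [ContinuousLinearEquiv.coe_coe, hTeq]
  let Hm : EuclideanSpace ℝ (Fin n) → (((Fin k ⊕ {j // j ∈ I}) → ℝ) × Kr) :=
    fun x => (Sum.elim (fun i => φ i x) (fun j : {j // j ∈ I} => h j x), pr x)
  have hHd : HasStrictFDerivAt Hm Tclm y := by
    refine HasStrictFDerivAt.prodMk ?_ pr.hasStrictFDerivAt
    refine hasStrictFDerivAt_pi'.mpr fun a => ?_
    rw [ContinuousLinearMap.proj_pi]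
    cases a with
    | inl i => exact (hφ i).hasStrictFDerivAt one_ne_zero
    | inr j => exact (hh j).hasStrictFDerivAt one_ne_zero
  have hHd' : HasStrictFDerivAt Hm (Teq : EuclideanSpace ℝ (Fin n) →L[ℝ]
      (((Fin k ⊕ {j // j ∈ I}) → ℝ) × Kr)) y := by rwa [hTcoe]
  let P := hHd'.toOpenPartialHomeomorph Hm
  have hPcoe : (P : EuclideanSpace ℝ (Fin n) → _) = Hm := hHd'.toOpenPartialHomeomorph_coe
  have hysrc : y ∈ P.source := hHd'.mem_toOpenPartialHomeomorph_source
  have hytgt : Hm y ∈ P.target := hHd'.image_mem_toOpenPartialHomeomorph_target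
  have hsymmHy : P.symm (Hm y) = y := by
    have := P.left_inv hysrc
    rwa [hPcoe] at this
  have hinv : HasStrictFDerivAt (⇑P.symm) ((Teq.symm : (((Fin k ⊕ {j // j ∈ I}) → ℝ) × Kr)
      →L[ℝ] EuclideanSpace ℝ (Fin n))) (Hm y) := by
    have := hHd'.to_localInverse (f := Hm)
    rwa [HasStrictFDerivAt.localInverse_def] at this
  let N : EuclideanSpace ℝ (Fin n) →L[ℝ] ((Fin k ⊕ {j // j ∈ I}) → ℝ) :=
    ContinuousLinearMap.pi (Sum.elim
      (fun _ : Fin k => (0 : EuclideanSpace ℝ (Fin n) →L[ℝ] ℝ))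
      (fun j : {j // j ∈ I} => fderiv ℝ (h j) y))
  let T' : EuclideanSpace ℝ (Fin n) →L[ℝ] (((Fin k ⊕ {j // j ∈ I}) → ℝ) × Kr) := N.prod pr
  let Mf : EuclideanSpace ℝ (Fin n) → (((Fin k ⊕ {j // j ∈ I}) → ℝ) × Kr) :=
    fun w => Hm y + T' w
  let Ff : EuclideanSpace ℝ (Fin n) → EuclideanSpace ℝ (Fin n) := fun w => P.symm (Mf w)
  have hMcont : Continuous Mf := continuous_const.add T'.continuous
  have hM0 : Mf 0 = Hm y := by simp [Mf]
  let O₀ : Set (EuclideanSpace ℝ (Fin n)) := Mf ⁻¹' P.target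
  have hO₀ : IsOpen O₀ := P.open_target.preimage hMcont
  have h0O₀ : (0 : EuclideanSpace ℝ (Fin n)) ∈ O₀ := by
    show Mf 0 ∈ P.target
    rw [hM0]; exact hytgt
  have hFcont : ContinuousOn Ff O₀ := by
    refine P.symm.continuousOn.comp hMcont.continuousOn fun w hw => ?_
    rwa [OpenPartialHomeomorph.symm_source]
  have hF0 : Ff 0 = y := by
    show P.symm (Mf 0) = y
    rw [hM0, hsymmHy]
  have hright : ∀ w ∈ O₀, Hm (Ff w) = Mf w := by
    intro w hw
    have := P.right_inv (show Mf w ∈ P.target from hw)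
    rwa [hPcoe] at this
  have hT'K : ∀ w ∈ K, T' w = Tclm w := by
    intro w hw
    have hN : N w = D w := by
      funext a
      cases a with
      | inl i =>
        show (0 : EuclideanSpace ℝ (Fin n) →L[ℝ] ℝ) w = fderiv ℝ (φ i) y w
        rw [(hw.1 i)]; rfl
      | inr j => rfl
    show (N w, pr w) = (D w, pr w)
    rw [hN]
  -- first-component computation on O₀
  have hcomp : ∀ w ∈ O₀, ∀ a : Fin k ⊕ {j // j ∈ I},
      Sum.elim (fun i => φ i (Ff w)) (fun j : {j // j ∈ I} => h j (Ff w)) a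
        = Sum.elim (fun i => φ i y) (fun j : {j // j ∈ I} => h j y) a + N w a := by
    intro w hw a
    have h1 := congrArg Prod.fst (hright w hw)
    have h2 : (Hm (Ff w)).1 = (Hm y).1 + (T' w).1 := h1
    exact congrFun h2 a
  have hφF : ∀ w ∈ O₀, ∀ i, φ i (Ff w) = 0 := by
    intro w hw i
    have := hcomp w hw (Sum.inl i)
    simpa [N, hyφ i] using this
  have hhFI : ∀ w ∈ O₀, ∀ j ∈ I, h j (Ff w) = fderiv ℝ (h j) y w := by
    intro w hw j hj
    have := hcomp w hw (Sum.inr ⟨j, hj⟩)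
    simpa [N, hact j hj] using this
  -- open sets controlling the inactive constraints
  let G : Fin r → Set (EuclideanSpace ℝ (Fin n)) := fun j =>
    if j ∈ I then O₀ else O₀ ∩ (fun w => h j (Ff w)) ⁻¹' Iio 0
  have hGopen : ∀ j, IsOpen (G j) := by
    intro j
    by_cases hj : j ∈ I
    · simp only [G, if_pos hj]; exact hO₀
    · simp only [G, if_neg hj]
      exact ((hh j).continuous.comp_continuousOn hFcont).isOpen_inter_preimage hO₀ isOpen_Iio
  have h0G : ∀ j, (0 : EuclideanSpace ℝ (Fin n)) ∈ G j := by
    intro j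
    by_cases hj : j ∈ I
    · simp only [G, if_pos hj]; exact h0O₀
    · simp only [G, if_neg hj]
      exact ⟨h0O₀, by simp only [mem_preimage, hF0, mem_Iio]; exact hinact j hj⟩
  let W : Set (EuclideanSpace ℝ (Fin n)) := O₀ ∩ ⋂ j, G j
  have hWopen : IsOpen W := hO₀.inter (isOpen_iInter_of_finite hGopen)
  have h0W : (0 : EuclideanSpace ℝ (Fin n)) ∈ W := ⟨h0O₀, mem_iInter.mpr h0G⟩
  obtain ⟨ε, hεpos, hball⟩ := Metric.isOpen_iff.mp hWopen 0 h0W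
  have hδpos : 0 < ε / 2 := by linarith
  have hδsub : closedBall (0 : EuclideanSpace ℝ (Fin n)) (ε / 2) ⊆ W :=
    (closedBall_subset_ball (by linarith)).trans hball
  have hKcone : IsConvexCone K := by
    refine ⟨⟨fun i => by simp, fun j hj => by simp⟩, ?_, ?_⟩
    · intro x1 hx1 x2 hx2 a b ha hb hab
      refine ⟨fun i => ?_, fun j hj => ?_⟩
      · simp only [map_add, map_smul, smul_eq_mul, hx1.1 i, hx2.1 i]; ring
      · have h1 := hx1.2 j hj
        have h2 := hx2.2 j hj
        simp only [map_add, map_smul, smul_eq_mul]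
        nlinarith
    · intro ρ hρ c hc
      refine ⟨fun i => ?_, fun j hj => ?_⟩
      · simp only [map_smul, smul_eq_mul, hc.1 i]; ring
      · have := hc.2 j hj
        simp only [map_smul, smul_eq_mul]
        nlinarith
  refine ⟨n, K, LinearMap.id, ε / 2, Ff, hKcone, ?_, hδpos, ?_, ?_, hF0, ?_⟩
  · simp
  · exact hFcont.mono fun w hw => (hδsub hw.2).1
  · rintro w ⟨hwK, hwb⟩
    have hwW : w ∈ W := hδsub hwb
    have hwO : w ∈ O₀ := hwW.1
    refine ⟨hφF w hwO, fun j => ?_⟩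
    by_cases hj : j ∈ I
    · rw [hhFI w hwO j hj]; exact hwK.2 j hj
    · have hm := mem_iInter.mp hwW.2 j
      simp only [G, if_neg hj] at hm
      exact le_of_lt hm.2
  · have hder := hinv.hasFDerivAt
    rw [hasFDerivAt_iff_isLittleO_nhds_zero] at hder
    have htend : Tendsto (fun w : EuclideanSpace ℝ (Fin n) => Tclm w)
        (𝓝[K ∩ closedBall 0 (ε / 2)] 0) (𝓝 0) := by
      have h1 := Tclm.continuous.tendsto 0
      rw [map_zero] at h1
      exact h1.mono_left nhdsWithin_le_nhds
    have h1 := hder.comp_tendsto htend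
    have h2 := h1.trans_isBigO (Tclm.isBigO_id _)
    refine h2.congr' ?_ EventuallyEq.rfl
    filter_upwards [self_mem_nhdsWithin] with w hw
    have hTw : T' w = Tclm w := hT'K w hw.1
    have hFw : Ff w = P.symm (Hm y + Tclm w) := by
      show P.symm (Hm y + T' w) = P.symm (Hm y + Tclm w)
      rw [hTw]
    have hTsymm : Teq.symm (Tclm w) = w := by
      rw [← hTeq w, ContinuousLinearEquiv.symm_apply_apply]
    show P.symm (Hm y + Tclm w) - P.symm (Hm y) - Teq.symm (Tclm w)
        = Ff w - y - LinearMap.id w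
    rw [hsymmHy, ← hFw, hTsymm]
    rfl
end

section
/- Let X be a finite-dimensional real vector space and let K₁, K₂ ⊆ X be convex cones. Then K₁ and K₂ are transversal if and only if either K₁ and K₂ are strongly transversal, or both K₁ and K₂ are linear subspaces with K₁ ⊕ K₂ = X (i.e. K₁ + K₂ = X and K₁ ∩ K₂ = {0}). -/
open Set

/-- Two cones are transversal if `K₁ - K₂ = X`. -/
def Transversal {X : Type*} [AddCommGroup X] [Module ℝ X] (K₁ K₂ : Set X) : Prop :=
  {x | ∃ k₁ ∈ K₁, ∃ k₂ ∈ K₂, x = k₁ - k₂} = Set.univ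

/-- Two cones are strongly transversal if they are transversal and `K₁ ∩ K₂ ≠ {0}`. -/
def StronglyTransversal {X : Type*} [AddCommGroup X] [Module ℝ X] (K₁ K₂ : Set X) : Prop :=
  Transversal K₁ K₂ ∧ K₁ ∩ K₂ ≠ {0}

lemma IsConvexCone.add_mem {X : Type*} [AddCommGroup X] [Module ℝ X] {K : Set X}
    (h : IsConvexCone K) {a b : X} (ha : a ∈ K) (hb : b ∈ K) : a + b ∈ K := by
  have hmid : (1/2 : ℝ) • a + (1/2 : ℝ) • b ∈ K :=
    h.2.1 ha hb (by norm_num) (by norm_num) (by norm_num)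
  have := h.2.2 2 (by norm_num) _ hmid
  rwa [smul_add, smul_smul, smul_smul, show (2 : ℝ) * (1/2) = 1 by norm_num,
    one_smul, one_smul] at this

/-- A convex cone closed under negation is a submodule. -/
def IsConvexCone.toSubmodule {X : Type*} [AddCommGroup X] [Module ℝ X] {K : Set X}
    (h : IsConvexCone K) (hneg : ∀ x ∈ K, -x ∈ K) : Submodule ℝ X where
  carrier := K
  add_mem' := h.add_mem
  zero_mem' := h.1
  smul_mem' := by
    intro r x hx
    rcases le_or_gt 0 r with hr | hr
    · exact h.2.2 r hr x hx
    · have : r • x = (-r) • (-x) := by simp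
      rw [this]
      exact h.2.2 (-r) (by linarith) _ (hneg x hx)

/-- Transversality holds iff either strong transversality holds, or both cones are
linear subspaces and `K₁ ⊕ K₂ = X` (i.e. `K₁ + K₂ = X` and `K₁ ∩ K₂ = {0}`). -/
theorem transversal_iff {X : Type*} [AddCommGroup X] [Module ℝ X]
    [FiniteDimensional ℝ X] (K₁ K₂ : Set X)
    (h₁ : IsConvexCone K₁) (h₂ : IsConvexCone K₂) :
    Transversal K₁ K₂ ↔
      (StronglyTransversal K₁ K₂ ∨
        ((∃ S₁ : Submodule ℝ X, K₁ = ↑S₁) ∧ (∃ S₂ : Submodule ℝ X, K₂ = ↑S₂) ∧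
          {x | ∃ k₁ ∈ K₁, ∃ k₂ ∈ K₂, x = k₁ + k₂} = Set.univ ∧
          K₁ ∩ K₂ = {0})) := by
  constructor
  · intro hT
    by_cases hcap : K₁ ∩ K₂ = {0}
    · right
      have hdecomp : ∀ x : X, ∃ k₁ ∈ K₁, ∃ k₂ ∈ K₂, x = k₁ - k₂ := by
        intro x
        have : x ∈ {x | ∃ k₁ ∈ K₁, ∃ k₂ ∈ K₂, x = k₁ - k₂} := by rw [hT]; trivial
        exact this
      -- K₁ is closed under negation
      have hneg₁ : ∀ x ∈ K₁, -x ∈ K₁ := by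
        intro k hk
        obtain ⟨a, ha, b, hb, hab⟩ := hdecomp (-k)
        have hbK₁ : b ∈ K₁ := by
          have : b = a + k := by
            have h' : a = -k + b := by rw [eq_sub_iff_add_eq] at hab; rw [← hab]
            rw [h']; abel
          rw [this]; exact h₁.add_mem ha hk
        have hb0 : b = 0 := by
          have : b ∈ K₁ ∩ K₂ := ⟨hbK₁, hb⟩
          rw [hcap] at this; exact this
        rw [hb0, sub_zero] at hab
        rw [hab]; exact ha
      have hneg₂ : ∀ x ∈ K₂, -x ∈ K₂ := by
        intro k hk
        obtain ⟨a, ha, b, hb, hab⟩ := hdecomp k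
        have haK₂ : a ∈ K₂ := by
          have : a = k + b := by rw [hab]; abel
          rw [this]; exact h₂.add_mem hk hb
        have ha0 : a = 0 := by
          have : a ∈ K₁ ∩ K₂ := ⟨ha, haK₂⟩
          rw [hcap] at this; exact this
        have : -k = b := by rw [ha0, zero_sub] at hab; rw [hab, neg_neg]
        rw [this]; exact hb
      refine ⟨⟨h₁.toSubmodule hneg₁, rfl⟩, ⟨h₂.toSubmodule hneg₂, rfl⟩, ?_, hcap⟩
      · ext x
        simp only [mem_setOf_eq, mem_univ, iff_true]
        obtain ⟨a, ha, b, hb, hab⟩ := hdecomp x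
        exact ⟨a, ha, -b, hneg₂ b hb, by rw [hab]; abel⟩
    · left; exact ⟨hT, hcap⟩
  · rintro (⟨hT, _⟩ | ⟨⟨S₁, hS₁⟩, ⟨S₂, hS₂⟩, hsum, _⟩)
    · exact hT
    · ext x
      simp only [mem_setOf_eq, mem_univ, iff_true]
      have : x ∈ {x | ∃ k₁ ∈ K₁, ∃ k₂ ∈ K₂, x = k₁ + k₂} := by rw [hsum]; trivial
      obtain ⟨a, ha, b, hb, hab⟩ := this
      refine ⟨a, ha, -b, ?_, by rw [hab]; abel⟩
      rw [hS₂] at hb ⊢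
      exact S₂.neg_mem hb
end

section
/- Let X be a finite-dimensional real vector space and let K₁, K₂ ⊆ X be convex cones. Then K₁ and K₂ are not transversal if and only if K₁ and K₂ are linearly separable, i.e. there exists a nonzero linear form p ∈ X* such that p·k₁ ≥ 0 for all k₁ ∈ K₁ and p·k₂ ≤ 0 for all k₂ ∈ K₂. -/
open Set

lemma aux_cone_sep {E : Type*} [NormedAddCommGroup E] [NormedSpace ℝ E]
    [FiniteDimensional ℝ E] (C : Set E) (h0 : (0:E) ∈ C) (hconv : Convex ℝ C)
    (hcone : ∀ r : ℝ, 0 ≤ r → ∀ c ∈ C, r • c ∈ C) (hne : C ≠ univ) :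
    ∃ f : Module.Dual ℝ E, f ≠ 0 ∧ ∀ c ∈ C, f c ≤ 0 := by
  by_cases hspan : Submodule.span ℝ C = ⊤
  · -- interior nonempty
    have hvs : vectorSpan ℝ C = ⊤ := by
      rw [eq_top_iff, ← hspan]
      refine Submodule.span_le.2 fun c hc => ?_
      have : c - 0 ∈ C -ᵥ C := Set.vsub_mem_vsub hc h0
      simpa [vectorSpan_def] using Submodule.subset_span this
    have haff : affineSpan ℝ C = ⊤ := by
      rw [AffineSubspace.affineSpan_eq_top_iff_vectorSpan_eq_top_of_nonempty ℝ E E ⟨0, h0⟩]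
      exact hvs
    have hint : (interior C).Nonempty :=
      (hconv.interior_nonempty_iff_affineSpan_eq_top).2 haff
    obtain ⟨a, ha⟩ := hint
    obtain ⟨x, hx⟩ : ∃ x, x ∉ C := by
      by_contra h; push_neg at h; exact hne (eq_univ_of_forall h)
    obtain ⟨f, hf⟩ := geometric_hahn_banach_open_point hconv.interior isOpen_interior
      (fun h => hx (interior_subset h))
    refine ⟨f.toLinearMap, ?_, ?_⟩
    · intro h0f
      have := hf a ha
      have : f a = 0 := by
        have : f.toLinearMap = 0 := by exact_mod_cast h0f
        simpa using LinearMap.congr_fun this a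
      have hfa := hf a ha
      rw [this] at hfa
      -- f x > 0, but also 0 ∈ interior? no. need contradiction: f = 0 means f a = f x = 0
      have hfx : f x = 0 := by
        have : f.toLinearMap = 0 := by exact_mod_cast h0f
        simpa using LinearMap.congr_fun this x
      rw [hfx] at hfa; exact lt_irrefl _ hfa
    · intro c hc
      by_contra hpos
      push_neg at hpos
      have hpos' : (0:ℝ) < f c := hpos
      -- for all r ≥ 0, (1/2) • (r • c) + (1/2) • a ∈ interior C
      have key : ∀ r : ℝ, 0 ≤ r → r * f c < 2 * f x - f a := by
        intro r hr
        have hmem : (1/2 : ℝ) • (r • c) + (1/2 : ℝ) • a ∈ interior C :=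
          hconv.combo_self_interior_mem_interior (hcone r hr c hc) ha
            (by norm_num) (by norm_num) (by norm_num)
        have h := hf _ hmem
        simp only [map_add, map_smul, smul_smul, smul_eq_mul] at h
        linarith
      have hpos2 : (0:ℝ) < 2 * f x - f a := by have := key 0 le_rfl; linarith
      have hr : (0:ℝ) ≤ (2 * f x - f a) / f c := le_of_lt (div_pos hpos2 hpos')
      have := key _ hr
      rw [div_mul_cancel₀ _ (ne_of_gt hpos')] at this
      exact lt_irrefl _ this
  · obtain ⟨f, hf0, hfbot⟩ := Submodule.exists_dual_map_eq_bot_of_lt_top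
      (lt_top_iff_ne_top.2 hspan) inferInstance
    refine ⟨f, hf0, fun c hc => ?_⟩
    have : f c ∈ (Submodule.span ℝ C).map f := ⟨c, Submodule.subset_span hc, rfl⟩
    rw [hfbot] at this
    simp_all

/-- Two convex cones in a finite-dimensional real vector space are not transversal
iff they are linearly separable. -/
theorem not_transversal_iff_linearly_separable {X : Type*} [AddCommGroup X] [Module ℝ X]
    [FiniteDimensional ℝ X] (K₁ K₂ : Set X)
    (h₁ : IsConvexCone K₁) (h₂ : IsConvexCone K₂) :
    ¬ Transversal K₁ K₂ ↔
      ∃ p : Module.Dual ℝ X, p ≠ 0 ∧ (∀ k ∈ K₁, 0 ≤ p k) ∧ (∀ k ∈ K₂, p k ≤ 0) := by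
  obtain ⟨h₁0, h₁conv, h₁cone⟩ := h₁
  obtain ⟨h₂0, h₂conv, h₂cone⟩ := h₂
  set C : Set X := {x | ∃ k₁ ∈ K₁, ∃ k₂ ∈ K₂, x = k₁ - k₂} with hCdef
  have hCconv : Convex ℝ C := by
    rintro x ⟨a₁, ha₁, a₂, ha₂, rfl⟩ y ⟨b₁, hb₁, b₂, hb₂, rfl⟩ s t hs ht hst
    exact ⟨s • a₁ + t • b₁, h₁conv ha₁ hb₁ hs ht hst,
      s • a₂ + t • b₂, h₂conv ha₂ hb₂ hs ht hst, by module⟩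
  have hC0 : (0 : X) ∈ C := ⟨0, h₁0, 0, h₂0, by simp⟩
  have hCcone : ∀ r : ℝ, 0 ≤ r → ∀ c ∈ C, r • c ∈ C := by
    rintro r hr x ⟨a₁, ha₁, a₂, ha₂, rfl⟩
    exact ⟨r • a₁, h₁cone r hr a₁ ha₁, r • a₂, h₂cone r hr a₂ ha₂, by module⟩
  constructor
  · intro hne
    have hne' : C ≠ univ := hne
    let e := (Module.finBasis ℝ X).equivFun
    have hne'' : (e '' C : Set (Fin (Module.finrank ℝ X) → ℝ)) ≠ univ := by
      intro h
      apply hne'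
      apply eq_univ_of_forall
      intro x
      have : e x ∈ e '' C := h ▸ mem_univ _
      obtain ⟨c, hc, hec⟩ := this
      rwa [← e.injective hec]
    obtain ⟨f, hf0, hfle⟩ := aux_cone_sep (e '' C)
      ⟨0, hC0, map_zero _⟩
      (hCconv.linear_image e.toLinearMap)
      (by rintro r hr _ ⟨c, hc, rfl⟩
          exact ⟨r • c, hCcone r hr c hc, map_smul _ _ _⟩)
      hne''
    refine ⟨-(f.comp (e : X →ₗ[ℝ] Fin (Module.finrank ℝ X) → ℝ)), ?_, ?_, ?_⟩
    · intro h
      apply hf0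
      refine LinearMap.ext fun y => ?_
      have h' := LinearMap.congr_fun h (e.symm y)
      simp only [LinearMap.neg_apply, LinearMap.comp_apply, LinearEquiv.coe_coe,
        LinearEquiv.apply_symm_apply, LinearMap.zero_apply, neg_eq_zero] at h'
      simpa using h'
    · intro k hk
      have : f (e k) ≤ 0 := hfle _ ⟨k, ⟨k, hk, 0, h₂0, by simp⟩, rfl⟩
      simpa using this
    · intro k hk
      have : f (e (-k)) ≤ 0 := hfle _ ⟨-k, ⟨0, h₁0, k, hk, by simp⟩, rfl⟩
      simp only [map_neg] at this
      simpa using this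
  · rintro ⟨p, hp0, hp1, hp2⟩ htr
    obtain ⟨x, hx⟩ : ∃ x, p x ≠ 0 := by
      by_contra h; push_neg at h; exact hp0 (LinearMap.ext fun y => by simp [h y])
    obtain ⟨y, hy⟩ : ∃ y, p y < 0 := by
      rcases lt_or_gt_of_ne hx with h | h
      · exact ⟨x, h⟩
      · exact ⟨-x, by simpa using neg_neg_iff_pos.2 h⟩
    have : y ∈ C := by rw [hCdef]; rw [Transversal] at htr; rw [htr]; exact mem_univ y
    obtain ⟨k₁, hk₁, k₂, hk₂, rfl⟩ := this
    have := hp1 k₁ hk₁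
    have := hp2 k₂ hk₂
    simp only [map_sub] at hy
    linarith
end

section
/- (Kuhn–Tucker condition) Let Ψ, φ₁,…,φ_k, h₁,…,h_r : ℝⁿ → ℝ be C¹ maps, let S = {x ∈ ℝⁿ : φ₁(x) = 0,…,φ_k(x) = 0, h₁(x) ≤ 0,…,h_r(x) ≤ 0}, and let x⋆ ∈ S be a local minimum point of Ψ restricted to S. Suppose that for a (possibly empty) subset {i₁,…,i_q} ⊆ {1,…,r} one has h_{i₁}(x⋆) = 0,…,h_{i_q}(x⋆) = 0, that h_j(x⋆) < 0 for every j ∈ {1,…,r}\{i₁,…,i_q}, and that the gradients ∇h_{i₁}(x⋆),…,∇h_{i_q}(x⋆), ∇φ₁(x⋆),…,∇φ_k(x⋆) are linearly independent. Then there exist real numbers α₁,…,α_k ∈ ℝ, β₁,…,β_q ≤ 0 and λ_c ≤ 0, not all zero, such that Σ_{i=1}^k α_i ∇φ_i(x⋆) + Σ_{j=1}^q β_j ∇h_{i_j}(x⋆) + λ_c ∇Ψ(x⋆) = 0. -/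
open Set

open Filter Topology

/-- Linearly independent continuous linear functionals attain any prescribed values. -/
lemma exists_forall_eq_of_linearIndependent {E : Type*} [NormedAddCommGroup E]
    [NormedSpace ℝ E] {ι : Type*} [Fintype ι] {f : ι → (E →L[ℝ] ℝ)}
    (hf : LinearIndependent ℝ f) (c : ι → ℝ) : ∃ v : E, ∀ i, f i v = c i := by
  classical
  set T : E →ₗ[ℝ] (ι → ℝ) := LinearMap.pi (fun i => (f i : E →ₗ[ℝ] ℝ)) with hT
  suffices hsurj : LinearMap.range T = ⊤ by
    obtain ⟨v, hv⟩ := LinearMap.range_eq_top.mp hsurj c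
    exact ⟨v, fun i => congrFun hv i⟩
  by_contra hne
  obtain ⟨g, hg0, hg⟩ := Submodule.exists_dual_map_eq_bot_of_lt_top
    (lt_top_iff_ne_top.mpr hne) inferInstance
  have hker : ∀ v : E, g (T v) = 0 := by
    intro v
    have : g (T v) ∈ (LinearMap.range T).map g :=
      Submodule.mem_map_of_mem (LinearMap.mem_range_self T v)
    rw [hg] at this
    simpa using this
  have hsum : ∑ i, g (Pi.single i 1) • f i = 0 := by
    ext v
    have h2 : g (T v) = ∑ i, g (Pi.single i 1) * f i v := by
      conv_lhs => rw [← Finset.univ_sum_single (T v), map_sum]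
      refine Finset.sum_congr rfl fun i _ => ?_
      have h3 : (Pi.single i (T v i) : ι → ℝ) = (T v i) • (Pi.single i (1 : ℝ) : ι → ℝ) := by
        rw [← Pi.single_smul, smul_eq_mul, mul_one]
      rw [h3, map_smul, smul_eq_mul, mul_comm]
      rfl
    have := hker v
    rw [h2] at this
    simpa using this
  have hzero : ∀ i, g (Pi.single i 1) = 0 :=
    Fintype.linearIndependent_iff.mp hf _ hsum
  apply hg0
  apply (Pi.basisFun ℝ ι).ext
  intro i
  rw [Pi.basisFun_apply]
  simpa using hzero i

/-- If a real function has negative derivative at `0`, it is eventually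
smaller than `f 0` just to the right of `0`. -/
lemma eventually_lt_of_hasDerivAt_neg {f : ℝ → ℝ} {d : ℝ}
    (hf : HasDerivAt f d 0) (hd : d < 0) : ∀ᶠ t in nhdsWithin 0 (Set.Ioi 0), f t < f 0 := by
  have hs := hasDerivAt_iff_tendsto_slope.mp hf
  have h1 : ∀ᶠ t in nhdsWithin 0 {(0:ℝ)}ᶜ, slope f 0 t < 0 := hs.eventually_lt_const hd
  have hmono : nhdsWithin (0:ℝ) (Set.Ioi 0) ≤ nhdsWithin 0 {(0:ℝ)}ᶜ :=
    nhdsWithin_mono 0 (fun t ht => ne_of_gt ht)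
  filter_upwards [h1.filter_mono hmono, self_mem_nhdsWithin] with t hslope ht
  have ht' : (0:ℝ) < t := ht
  rw [slope_def_field] at hslope
  have h2 : f t - f 0 < 0 := by
    by_contra hge
    push_neg at hge
    have : 0 ≤ (f t - f 0) / (t - 0) := div_nonneg hge (by linarith)
    linarith
  linarith

lemma no_feasible_descent {n k r : ℕ}
    (Ψ : EuclideanSpace ℝ (Fin n) → ℝ) (hΨ : ContDiff ℝ 1 Ψ)
    (φ : Fin k → EuclideanSpace ℝ (Fin n) → ℝ) (hφ : ∀ i, ContDiff ℝ 1 (φ i))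
    (h : Fin r → EuclideanSpace ℝ (Fin n) → ℝ) (hh : ∀ j, ContDiff ℝ 1 (h j))
    (xstar : EuclideanSpace ℝ (Fin n))
    (hxφ : ∀ i, φ i xstar = 0)
    (δ : ℝ) (hδ : 0 < δ)
    (hmin : ∀ x : EuclideanSpace ℝ (Fin n),
      (∀ i, φ i x = 0) → (∀ j, h j x ≤ 0) → ‖x - xstar‖ ≤ δ → Ψ xstar ≤ Ψ x)
    (I : Finset (Fin r))
    (hact : ∀ j ∈ I, h j xstar = 0)
    (hinact : ∀ j ∉ I, h j xstar < 0)
    (hindφ : LinearIndependent ℝ (fun i : Fin k => fderiv ℝ (φ i) xstar))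
    (v : EuclideanSpace ℝ (Fin n))
    (hv1 : ∀ i, fderiv ℝ (φ i) xstar v = 0)
    (hv2 : ∀ j ∈ I, fderiv ℝ (h j) xstar v < 0)
    (hv3 : fderiv ℝ Ψ xstar v < 0) : False := by
  classical
  set Φ : EuclideanSpace ℝ (Fin n) → (Fin k → ℝ) := fun x i => φ i x with hΦdef
  set D : EuclideanSpace ℝ (Fin n) →L[ℝ] (Fin k → ℝ) :=
    ContinuousLinearMap.pi (fun i => fderiv ℝ (φ i) xstar) with hD
  have hstrict : ∀ i, HasStrictFDerivAt (φ i) (fderiv ℝ (φ i) xstar) xstar := fun i =>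
    (hφ i).contDiffAt.hasStrictFDerivAt one_ne_zero
  have hΦstrict : HasStrictFDerivAt Φ D xstar := hasStrictFDerivAt_pi.mpr hstrict
  have hDsurj : D.range = ⊤ := by
    rw [LinearMap.range_eq_top]
    intro c
    obtain ⟨w, hw⟩ := exists_forall_eq_of_linearIndependent hindφ c
    exact ⟨w, funext hw⟩
  have hvker : v ∈ D.ker := by
    rw [LinearMap.mem_ker]
    ext i
    exact hv1 i
  set v' : D.ker := ⟨v, hvker⟩ with hv'
  set x : ℝ → EuclideanSpace ℝ (Fin n) :=
    fun t => hΦstrict.implicitFunction Φ D hDsurj (Φ xstar) (t • v') with hxdef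
  have hx0 : x 0 = xstar := by
    simp only [hxdef, zero_smul]
    exact HasStrictFDerivAt.implicitFunction_apply_image hΦstrict hDsurj
  -- derivative of x at 0 is v
  have hgs : HasStrictFDerivAt (hΦstrict.implicitFunction Φ D hDsurj (Φ xstar))
      (D.ker).subtypeL 0 := hΦstrict.to_implicitFunction hDsurj
  have hlin : HasStrictFDerivAt (fun t : ℝ => t • v')
      ((1 : ℝ →L[ℝ] ℝ).smulRight v') 0 := by
    exact ((1 : ℝ →L[ℝ] ℝ).smulRight v').hasStrictFDerivAt (x := (0:ℝ))
  have hxs : HasStrictFDerivAt x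
      ((D.ker).subtypeL.comp ((1 : ℝ →L[ℝ] ℝ).smulRight v')) 0 := by
    have h0 : (fun t : ℝ => t • v') 0 = 0 := by simp
    have := HasStrictFDerivAt.comp (g := hΦstrict.implicitFunction Φ D hDsurj (Φ xstar))
      (f := fun t : ℝ => t • v') 0 (h0 ▸ hgs) hlin
    exact this
  have hxd : HasDerivAt x v 0 := by
    have h1 : HasStrictFDerivAt x ((1 : ℝ →L[ℝ] ℝ).smulRight v) 0 := by
      convert hxs using 1
      refine ContinuousLinearMap.ext fun t => ?_
      simp [hv']
    have h2 := h1.hasFDerivAt.hasDerivAt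
    simpa using h2
  have hxcont : ContinuousAt x 0 := hxd.continuousAt
  -- x t satisfies the equality constraints eventually
  have hΦev : ∀ᶠ t in 𝓝 (0:ℝ), Φ (x t) = Φ xstar := by
    have hmap := hΦstrict.map_implicitFunction_eq hDsurj
    have htend : Tendsto (fun t : ℝ => ((Φ xstar, t • v') :
        (Fin k → ℝ) × D.ker)) (𝓝 0) (𝓝 (Φ xstar, 0)) := by
      refine Tendsto.prodMk_nhds tendsto_const_nhds ?_
      have : Continuous (fun t : ℝ => t • v') := continuous_id.smul continuous_const
      simpa using this.tendsto 0
    exact htend.eventually hmap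
  -- active inequality constraints become strictly negative for small positive t
  have hjev : ∀ j ∈ I, ∀ᶠ t in nhdsWithin (0:ℝ) (Set.Ioi 0), h j (x t) < 0 := by
    intro j hj
    have hfd : HasFDerivAt (h j) (fderiv ℝ (h j) xstar) (x 0) := by
      rw [hx0]
      exact ((hh j).differentiable one_ne_zero (xstar)).hasFDerivAt
    have hcomp : HasDerivAt (fun t => h j (x t)) (fderiv ℝ (h j) xstar v) 0 :=
      hfd.comp_hasDerivAt 0 hxd
    filter_upwards [eventually_lt_of_hasDerivAt_neg hcomp (hv2 j hj)] with t ht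
    rwa [hx0, hact j hj] at ht
  -- objective decreases
  have hΨev : ∀ᶠ t in nhdsWithin (0:ℝ) (Set.Ioi 0), Ψ (x t) < Ψ xstar := by
    have hfd : HasFDerivAt Ψ (fderiv ℝ Ψ xstar) (x 0) := by
      rw [hx0]
      exact (hΨ.differentiable one_ne_zero xstar).hasFDerivAt
    have hcomp : HasDerivAt (fun t => Ψ (x t)) (fderiv ℝ Ψ xstar v) 0 :=
      hfd.comp_hasDerivAt 0 hxd
    filter_upwards [eventually_lt_of_hasDerivAt_neg hcomp hv3] with t ht
    rwa [hx0] at ht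
  -- inactive constraints stay negative
  have hinev : ∀ j ∉ I, ∀ᶠ t in 𝓝 (0:ℝ), h j (x t) < 0 := by
    intro j hj
    have hc : ContinuousAt (fun t => h j (x t)) 0 :=
      ((hh j).continuous.continuousAt).comp hxcont
    have hten := hc.tendsto
    rw [hx0] at hten
    exact hten.eventually_lt_const (hinact j hj)
  -- distance stays small
  have hdistev : ∀ᶠ t in 𝓝 (0:ℝ), ‖x t - xstar‖ ≤ δ := by
    have : Tendsto (fun t => ‖x t - xstar‖) (𝓝 0) (𝓝 ‖x 0 - xstar‖) :=
      (hxcont.sub continuousAt_const).norm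
    rw [hx0] at this
    simp only [sub_self, norm_zero] at this
    filter_upwards [this.eventually_lt_const hδ] with t ht using le_of_lt ht
  -- combine
  have hall : ∀ᶠ t in nhdsWithin (0:ℝ) (Set.Ioi 0),
      (∀ i, φ i (x t) = 0) ∧ (∀ j, h j (x t) ≤ 0) ∧ ‖x t - xstar‖ ≤ δ ∧ Ψ (x t) < Ψ xstar := by
    have hIfin : ∀ᶠ t in nhdsWithin (0:ℝ) (Set.Ioi 0), ∀ j ∈ I, h j (x t) < 0 :=
      (eventually_all_finset I).mpr (fun j hj => hjev j hj)
    have hNIfin : ∀ᶠ t in 𝓝 (0:ℝ), ∀ j ∈ Iᶜ, h j (x t) < 0 :=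
      (eventually_all_finset Iᶜ).mpr (fun j hj => hinev j (Finset.mem_compl.mp hj))
    filter_upwards [hIfin, hNIfin.filter_mono nhdsWithin_le_nhds,
      hΦev.filter_mono nhdsWithin_le_nhds, hdistev.filter_mono nhdsWithin_le_nhds, hΨev]
      with t h1 h2 h3 h4 h5
    refine ⟨fun i => ?_, fun j => ?_, h4, h5⟩
    · have := congrFun h3 i
      simpa [hΦdef, hxφ i] using this
    · by_cases hj : j ∈ I
      · exact le_of_lt (h1 j hj)
      · exact le_of_lt (h2 j (Finset.mem_compl.mpr hj))
  obtain ⟨t, ht⟩ := hall.exists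
  have := hmin (x t) ht.1 ht.2.1 ht.2.2.1
  linarith [ht.2.2.2]

/-- Kuhn–Tucker conditions: at a local minimum of `Ψ` on the set defined by the
equality constraints `φ i = 0` and inequality constraints `h j ≤ 0`, assuming the
gradients of the equality constraints and of the active inequality constraints are
linearly independent, there exist multipliers `α`, `β ≤ 0` (supported on the active
set `I`) and `lamc ≤ 0`, not all zero, with
`∑ α_i ∇φ_i(x⋆) + ∑ β_j ∇h_j(x⋆) + lamc ∇Ψ(x⋆) = 0`. -/
theorem kuhn_tucker {n k r : ℕ}
    (Ψ : EuclideanSpace ℝ (Fin n) → ℝ) (hΨ : ContDiff ℝ 1 Ψ)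
    (φ : Fin k → EuclideanSpace ℝ (Fin n) → ℝ) (hφ : ∀ i, ContDiff ℝ 1 (φ i))
    (h : Fin r → EuclideanSpace ℝ (Fin n) → ℝ) (hh : ∀ j, ContDiff ℝ 1 (h j))
    (xstar : EuclideanSpace ℝ (Fin n))
    (hxφ : ∀ i, φ i xstar = 0) (hxh : ∀ j, h j xstar ≤ 0)
    (δ : ℝ) (hδ : 0 < δ)
    (hmin : ∀ x : EuclideanSpace ℝ (Fin n),
      (∀ i, φ i x = 0) → (∀ j, h j x ≤ 0) → ‖x - xstar‖ ≤ δ → Ψ xstar ≤ Ψ x)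
    (I : Finset (Fin r))
    (hact : ∀ j ∈ I, h j xstar = 0)
    (hinact : ∀ j ∉ I, h j xstar < 0)
    (hind : LinearIndependent ℝ
      (Sum.elim (fun j : {j // j ∈ I} => fderiv ℝ (h j) xstar)
        (fun i : Fin k => fderiv ℝ (φ i) xstar))) :
    ∃ (α : Fin k → ℝ) (β : Fin r → ℝ) (lamc : ℝ),
      (∀ j, β j ≤ 0) ∧ (∀ j ∉ I, β j = 0) ∧ lamc ≤ 0 ∧
      ¬(α = 0 ∧ β = 0 ∧ lamc = 0) ∧
      (∑ i, α i • fderiv ℝ (φ i) xstar) + (∑ j, β j • fderiv ℝ (h j) xstar)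
        + lamc • fderiv ℝ Ψ xstar = 0 := by
  classical
  set g : ({j // j ∈ I} ⊕ Fin k) → (EuclideanSpace ℝ (Fin n) →L[ℝ] ℝ) :=
    Sum.elim (fun j : {j // j ∈ I} => fderiv ℝ (h j) xstar)
      (fun i : Fin k => fderiv ℝ (φ i) xstar) with hg
  have hindφ : LinearIndependent ℝ (fun i : Fin k => fderiv ℝ (φ i) xstar) := by
    have := hind.comp Sum.inr Sum.inr_injective
    exact this
  have claim : ∀ v : EuclideanSpace ℝ (Fin n), (∀ i, fderiv ℝ (φ i) xstar v = 0) →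
      (∀ j ∈ I, fderiv ℝ (h j) xstar v < 0) → ¬ (fderiv ℝ Ψ xstar v < 0) :=
    fun v h1 h2 h3 => no_feasible_descent Ψ hΨ φ hφ h hh xstar hxφ δ hδ hmin I
      hact hinact hindφ v h1 h2 h3
  -- Step 1: the gradient of Ψ lies in the span of the constraint gradients
  have hspan : fderiv ℝ Ψ xstar ∈ Submodule.span ℝ (Set.range g) := by
    by_contra hnot
    have hind2 : LinearIndependent ℝ
        (fun o : Option ({j // j ∈ I} ⊕ Fin k) =>
          Option.casesOn' o (fderiv ℝ Ψ xstar) g) := hind.option hnot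
    obtain ⟨v, hv⟩ := exists_forall_eq_of_linearIndependent hind2
      (fun o => Option.casesOn' o (-1) (Sum.elim (fun _ => -1) (fun _ => 0)))
    refine claim v (fun i => ?_) (fun j hj => ?_) ?_
    · simpa [hg] using hv (some (Sum.inr i))
    · have := hv (some (Sum.inl ⟨j, hj⟩))
      simp only [Option.casesOn'_some, Sum.elim_inl, hg] at this
      rw [this]; norm_num
    · have := hv none
      simp only [Option.casesOn'_none] at this
      rw [this]; norm_num
  obtain ⟨c, hc⟩ := (Submodule.mem_span_range_iff_exists_fun ℝ).mp hspan
  -- hc : ∑ s, c s • g s = fderiv ℝ Ψ xstar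
  set β : Fin r → ℝ := fun j => if hj : j ∈ I then c (Sum.inl ⟨j, hj⟩) else 0 with hβ
  -- Step 2: the active multipliers are nonpositive
  have hβle : ∀ j, β j ≤ 0 := by
    intro j
    by_cases hj : j ∈ I
    swap
    · simp [hβ, hj]
    rw [hβ]; simp only [hj, dif_pos]
    set j0 : {j // j ∈ I} := ⟨j, hj⟩
    by_contra hpos
    push_neg at hpos
    set b : ℝ := c (Sum.inl j0) with hb
    set M : ℝ := ∑ j' ∈ Finset.univ.erase j0, |c (Sum.inl j')| with hM
    have hM0 : 0 ≤ M := Finset.sum_nonneg fun _ _ => abs_nonneg _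
    set ε : ℝ := b / (1 + M) with hε
    have hε0 : 0 < ε := div_pos hpos (by linarith)
    obtain ⟨v, hv⟩ := exists_forall_eq_of_linearIndependent hind
      (Sum.elim (fun j' : {j // j ∈ I} => if j' = j0 then -1 else -ε) (fun _ => 0))
    refine claim v (fun i => ?_) (fun j' hj' => ?_) ?_
    · simpa [hg] using hv (Sum.inr i)
    · have := hv (Sum.inl ⟨j', hj'⟩)
      simp only [Sum.elim_inl, hg] at this
      rw [this]
      split <;> [norm_num; linarith]
    · -- compute fderiv Ψ v
      have hΨv : fderiv ℝ Ψ xstar v = ∑ s, c s • g s v := by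
        rw [← hc]; simp
      rw [hΨv, Fintype.sum_sum_type]
      have hinrz : ∀ i : Fin k, c (Sum.inr i) • g (Sum.inr i) v = 0 := by
        intro i
        have := hv (Sum.inr i)
        simp only [Sum.elim_inr] at this
        simp [this]
      have hsplit : ∑ j' : {j // j ∈ I}, c (Sum.inl j') • g (Sum.inl j') v
          = -b + ∑ j' ∈ Finset.univ.erase j0, c (Sum.inl j') * (-ε) := by
        rw [← Finset.add_sum_erase _ _ (Finset.mem_univ j0)]
        congr 1
        · have := hv (Sum.inl j0)
          simp only [Sum.elim_inl, if_pos rfl] at this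
          rw [this]; simp [hb]
        · refine Finset.sum_congr rfl fun j' hj' => ?_
          have hne : j' ≠ j0 := (Finset.mem_erase.mp hj').1
          have := hv (Sum.inl j')
          simp only [Sum.elim_inl, if_neg hne] at this
          rw [this]; simp
      rw [Finset.sum_congr rfl (fun i _ => hinrz i), Finset.sum_const_zero, add_zero, hsplit]
      have habs : |∑ j' ∈ Finset.univ.erase j0, c (Sum.inl j') * (-ε)|
          ≤ ε * M := by
        calc |∑ j' ∈ Finset.univ.erase j0, c (Sum.inl j') * (-ε)|
            ≤ ∑ j' ∈ Finset.univ.erase j0, |c (Sum.inl j') * (-ε)| :=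
              Finset.abs_sum_le_sum_abs _ _
          _ = ε * M := by
              rw [hM, Finset.mul_sum]
              refine Finset.sum_congr rfl fun j' _ => ?_
              rw [abs_mul, abs_neg, abs_of_pos hε0]
              ring
      have hεM : ε * M < b := by
        rw [hε, div_mul_eq_mul_div, div_lt_iff₀ (by linarith)]
        nlinarith
      have := abs_le.mp habs
      linarith [this.1]
  refine ⟨fun i => c (Sum.inr i), β, -1, hβle, ?_, by norm_num, ?_, ?_⟩
  · intro j hj
    simp [hβ, hj]
  · rintro ⟨-, -, hlam⟩
    norm_num at hlam
  · have hsumβ : ∑ j, β j • fderiv ℝ (h j) xstar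
        = ∑ j : {j // j ∈ I}, c (Sum.inl j) • fderiv ℝ (h (j : Fin r)) xstar := by
      rw [← Finset.sum_subset (Finset.subset_univ I)
        (fun j _ hj => by simp [hβ, hj]),
        ← Finset.sum_coe_sort I (fun j => β j • fderiv ℝ (h j) xstar)]
      refine Finset.sum_congr rfl fun j _ => ?_
      have hj : (j : Fin r) ∈ I := j.2
      simp [hβ, hj]
    have hcc : (∑ j : {j // j ∈ I}, c (Sum.inl j) • fderiv ℝ (h (j : Fin r)) xstar)
        + (∑ i, c (Sum.inr i) • fderiv ℝ (φ i) xstar) = fderiv ℝ Ψ xstar := by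
      rw [← hc, Fintype.sum_sum_type]
      rfl
    rw [hsumβ, neg_one_smul]
    rw [add_comm (∑ i, c (Sum.inr i) • fderiv ℝ (φ i) xstar)]
    rw [hcc]
    abel
end
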